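/- arXiv:2408.01367 — 6 statements merged into one kernel-verified Lean document; each statement's English description precedes it below -/
import Mathlib

section
/- Let Ω ⊂ ℝ^d be a compact set and let μ, ν be Borel probability measures on Ω. If L(μ)(a, c) = L(ν)(a, c) for all a ∈ ℝ^d and all c ∈ ℝ, then μ = ν; that is, the generalized Laplace-like transform μ ↦ L(μ) is injective on probability measures on Ω. -/
open MeasureTheory Set Filter
open scoped ENNReal RealInnerProductSpace BigOperators Topology

noncomputable section

/-- Euclidean space `ℝ^n`. -/
abbrev E (n : ℕ) : Type := EuclideanSpace ℝ (Fin n)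

/-- Build a vector of `ℝ^n` from its coordinates. -/
def toE {n : ℕ} (f : Fin n → ℝ) : E n := (EuclideanSpace.equiv (Fin n) ℝ).symm f

/-- Parameters `θ = (Wʰ, Qʰ, Kʰ, Vʰ)ₕ` of a multi-head attention layer with token
dimension `m`, head dimension `dh`, key/query dimension `k` and `H` heads.
(Matrices are represented as linear maps.) -/
structure AttentionParams (m dh k H : ℕ) where
  W : Fin H → (E dh →L[ℝ] E m)
  Q : Fin H → (E m →L[ℝ] E k)
  K : Fin H → (E m →L[ℝ] E k)
  V : Fin H → (E m →L[ℝ] E dh)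

/-- The (unmasked) multi-head self-attention in-context map `Γ_θ(μ, x)`. -/
def attention {m dh k H : ℕ} (θ : AttentionParams m dh k H)
    (μ : Measure (E m)) (x : E m) : E m :=
  x + ∑ h : Fin H, θ.W h (∫ y,
      (Real.exp (⟪θ.Q h x, θ.K h y⟫ / Real.sqrt k) /
        ∫ z, Real.exp (⟪θ.Q h x, θ.K h z⟫ / Real.sqrt k) ∂μ) • θ.V h y ∂μ)

/-- In-context maps `(μ, x) ↦ G(μ, x)`. -/
abbrev ICMap (m m' : ℕ) : Type := Measure (E m) → E m → E m'

/-- In-context composition `(G₂ ⋄ G₁)(μ, x) = G₂(G₁(μ, ·)♯μ, G₁(μ, x))`. -/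
def ictxComp {m m' m'' : ℕ} (G₂ : ICMap m' m'') (G₁ : ICMap m m') : ICMap m m'' :=
  fun μ x => G₂ (μ.map (G₁ μ)) (G₁ μ x)

/-- A context-free (tokenwise) layer, viewed as an in-context map. -/
def ctxFree {m m' : ℕ} (F : E m → E m') : ICMap m m' := fun _ x => F x

/-- `IsAttnChain dmax Hmax G` holds iff `G = F_{ξ_L} ⋄ Γ_{θ_L} ⋄ ⋯ ⋄ F_{ξ_1} ⋄ Γ_{θ_1}`
for some `L ≥ 1`, where each `Γ_{θ_ℓ}` is a multi-head self-attention with token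
dimension `≤ dmax`, head and key dimensions `1`, and at most `Hmax` heads, and each
`F_{ξ_ℓ}` is a context-free tokenwise layer. -/
inductive IsAttnChain (dmax Hmax : ℕ) : {m m' : ℕ} → ICMap m m' → Prop
  | base {m m' H : ℕ} (hm : m ≤ dmax) (hH : H ≤ Hmax)
      (θ : AttentionParams m 1 1 H) (F : E m → E m') :
      IsAttnChain dmax Hmax (ictxComp (ctxFree F) (attention θ))
  | step {m m' m'' H : ℕ} {T : ICMap m m'} (hT : IsAttnChain dmax Hmax T)
      (hm : m' ≤ dmax) (hH : H ≤ Hmax)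
      (θ : AttentionParams m' 1 1 H) (F : E m' → E m'') :
      IsAttnChain dmax Hmax (ictxComp (ctxFree F) (ictxComp (attention θ) T))

/-- The elementary in-context map `γ_λ`, `λ = (a, b, c, v)`. -/
def elemGamma {d : ℕ} (a : E d) (b c v : ℝ) (μ : Measure (E d)) (x : E d) : ℝ :=
  ⟪x, a⟫ + b + ∫ y,
      (Real.exp (c * (⟪x, a⟫ + b) * (⟪y, a⟫ + b)) * (v * (⟪a, y⟫ + b)) /
        ∫ z, Real.exp (c * (⟪x, a⟫ + b) * (⟪z, a⟫ + b)) ∂μ) ∂μ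

/-- Component-wise (Hadamard) product `v₁ ⊙ ⋯ ⊙ v_T` of vectors in `ℝ^n`. -/
def hprod {n T : ℕ} (f : Fin T → E n) : E n := toE fun i => ∏ t, f t i

/-- Nested application `Φ(v_T, Φ(v_{T-1}, ⋯ Φ(v_1, 𝟏) ⋯ ))`. -/
def nestPhi {n : ℕ} (Φ : E n × E n → E n) : (T : ℕ) → (Fin T → E n) → E n
  | 0, _ => toE fun _ => 1
  | T + 1, v => Φ (v (Fin.last T), nestPhi Φ T fun t => v t.castSucc)

/-- Composition of a list of in-context maps; the head of the list acts first. -/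
def compList {m : ℕ} : List (ICMap m m) → ICMap m m
  | [] => fun _ x => x
  | l :: ls => ictxComp (compList ls) l

/-! ### Masked (space-time) framework -/

/-- Time marginal `μ̄ = P♯μ`, `P(x, t) = t`. -/
def timeMarg {m : ℕ} (μ : Measure (E m × ℝ)) : Measure ℝ := μ.map Prod.snd

/-- Squared 2-Wasserstein distance `W₂(α, β)²`, as an infimum over couplings. -/
def W2sq {m : ℕ} (α β : Measure (E m)) : ℝ≥0∞ :=
  sInf {c | ∃ π : Measure (E m × E m), π.map Prod.fst = α ∧ π.map Prod.snd = β ∧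
      c = ∫⁻ p, edist p.1 p.2 ^ 2 ∂π}

/-- `μ ∈ Lip_C^σ(Ω̃)`: a probability measure on `Ω̃ = Ω × [0,1]` admitting a
disintegration `μ(dx, ds) = μ(dx|s) μ̄(ds)` whose conditional `s ↦ μ(·|s)` is
`C`-Lipschitz for `W₂`, and with `μ̄({0}) ≥ σ`. -/
def IsLipCtx {m : ℕ} (Ω : Set (E m)) (C σ : ℝ) (μ : Measure (E m × ℝ)) : Prop :=
  IsProbabilityMeasure μ ∧ μ ((Ω ×ˢ Icc (0:ℝ) 1)ᶜ) = 0 ∧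
    ENNReal.ofReal σ ≤ timeMarg μ {0} ∧
    ∃ κ : ℝ → Measure (E m), Measurable κ ∧ (∀ s, IsProbabilityMeasure (κ s)) ∧
      (∀ s, κ s Ωᶜ = 0) ∧
      μ = (timeMarg μ).bind (fun s => (κ s).map fun x => (x, s)) ∧
      ∀ s ∈ Icc (0:ℝ) 1, ∀ t ∈ Icc (0:ℝ) 1,
        W2sq (κ s) (κ t) ≤ ENNReal.ofReal (C * |s - t|) ^ 2

/-- The masked measure `μ_t = (1_{[0,t]} / μ̄([0,t])) · μ` (restriction of the time
variable to `[0, t]`, renormalized). -/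
def maskedM {m : ℕ} (μ : Measure (E m × ℝ)) (t : ℝ) : Measure (E m × ℝ) :=
  (μ (univ ×ˢ Icc 0 t))⁻¹ • μ.restrict (univ ×ˢ Icc 0 t)

/-- The masked measure, as a probability measure (junk value `μ` itself when
`μ̄([0,t]) = 0`; for `μ ∈ Lip_C^σ` and `t ∈ [0,1]` one has `μ̄([0,t]) ≥ σ > 0`). -/
def maskedP {m : ℕ} (μ : ProbabilityMeasure (E m × ℝ)) (t : ℝ) :
    ProbabilityMeasure (E m × ℝ) :=
  if h : μ.toMeasure (univ ×ˢ Icc 0 t) = 0 then μ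
  else ⟨maskedM μ.toMeasure t, ⟨by
    simp only [maskedM, Measure.smul_apply, Measure.restrict_apply_univ, smul_eq_mul]
    exact ENNReal.inv_mul_cancel h (measure_ne_top _ _)⟩⟩

/-- Space-time in-context maps `(μ, (x, t)) ↦ Λ(μ, x, t)`. -/
abbrev STMap (m m' : ℕ) : Type := Measure (E m × ℝ) → E m × ℝ → E m'

/-- Masked in-context composition
`(Γ₂ ⋄ Γ₁)(μ, x, t) = Γ₂((Γ₁(μ), Id)♯μ, Γ₁(μ, x, t), t)`. -/
def stComp {m m' m'' : ℕ} (Γ₂ : STMap m' m'') (Γ₁ : STMap m m') : STMap m m'' :=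
  fun μ p => Γ₂ (μ.map fun q => (Γ₁ μ q, q.2)) (Γ₁ μ p, p.2)

/-- A context-free layer acting tokenwise in space, as a space-time map. -/
def stCtxFree {m m' : ℕ} (F : E m → E m') : STMap m m' := fun _ p => F p.1

/-- The masked multi-head self-attention in-context map `Γ_θ(μ, x, t)`. -/
def maskedAttention {m dh k H : ℕ} (θ : AttentionParams m dh k H)
    (μ : Measure (E m × ℝ)) (p : E m × ℝ) : E m :=
  p.1 + ∑ h : Fin H, θ.W h (∫ y,
      ((Real.exp (⟪θ.Q h p.1, θ.K h y.1⟫ / Real.sqrt k) *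
          (Icc (0:ℝ) p.2).indicator 1 y.2) /
        ∫ z, Real.exp (⟪θ.Q h p.1, θ.K h z.1⟫ / Real.sqrt k) *
          (Icc (0:ℝ) p.2).indicator 1 z.2 ∂μ) • θ.V h y.1 ∂μ)

/-- The unmasked attention formula on space-time measures (no time masking). -/
def attentionST {m dh k H : ℕ} (θ : AttentionParams m dh k H)
    (μ : Measure (E m × ℝ)) (x : E m) : E m :=
  x + ∑ h : Fin H, θ.W h (∫ y,
      (Real.exp (⟪θ.Q h x, θ.K h y.1⟫ / Real.sqrt k) /
        ∫ z, Real.exp (⟪θ.Q h x, θ.K h z.1⟫ / Real.sqrt k) ∂μ) • θ.V h y.1 ∂μ)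

/-- Causality of a space-time in-context map: `Λ(μ, x, t) = Λ(μ_t, x, t)`. -/
def IsCausalM {m d' : ℕ} (Ω : Set (E m)) (C σ : ℝ) (Λ : STMap m d') : Prop :=
  ∀ μ, IsLipCtx Ω C σ μ → ∀ x ∈ Ω, ∀ t ∈ Icc (0:ℝ) 1,
    Λ μ (x, t) = Λ (maskedM μ t) (x, t)

/-- Identifiability: `μ_t = μ_{t'}` implies `Λ(μ_t, ·, t) = Λ(μ_{t'}, ·, t')`. -/
def IsIdentifiableM {m d' : ℕ} (Ω : Set (E m)) (C σ : ℝ) (Λ : STMap m d') : Prop :=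
  ∀ μ, IsLipCtx Ω C σ μ → ∀ t ∈ Icc (0:ℝ) 1, ∀ t' ∈ Icc (0:ℝ) 1,
    maskedM μ t = maskedM μ t' →
    ∀ x ∈ Ω, Λ (maskedM μ t) (x, t) = Λ (maskedM μ t') (x, t')

/-- Space-time in-context maps taking a probability measure (carrying the weak*
topology) as context. -/
abbrev PSTMap (m d' : ℕ) : Type := ProbabilityMeasure (E m × ℝ) → E m × ℝ → E d'

/-- Causality, probability-measure version. -/
def IsCausalP {m d' : ℕ} (Ω : Set (E m)) (C σ : ℝ) (Λ : PSTMap m d') : Prop :=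
  ∀ μ : ProbabilityMeasure (E m × ℝ), IsLipCtx Ω C σ μ.toMeasure →
    ∀ x ∈ Ω, ∀ t ∈ Icc (0:ℝ) 1, Λ μ (x, t) = Λ (maskedP μ t) (x, t)

/-- Identifiability, probability-measure version. -/
def IsIdentifiableP {m d' : ℕ} (Ω : Set (E m)) (C σ : ℝ) (Λ : PSTMap m d') : Prop :=
  ∀ μ : ProbabilityMeasure (E m × ℝ), IsLipCtx Ω C σ μ.toMeasure →
    ∀ t ∈ Icc (0:ℝ) 1, ∀ t' ∈ Icc (0:ℝ) 1,
      maskedP μ t = maskedP μ t' →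
      ∀ x ∈ Ω, Λ (maskedP μ t) (x, t) = Λ (maskedP μ t') (x, t')

/-- `e(μ̄) = max supp(μ̄)`: the endpoint of the support of the time marginal. -/
def timeEnd {m : ℕ} (μ : Measure (E m × ℝ)) : ℝ :=
  sSup {r : ℝ | ∀ ε > 0, timeMarg μ (Ioo (r - ε) (r + ε)) ≠ 0}

/-- The reduced space `X_C^σ = {(μ_t, x) : μ ∈ Lip_C^σ(Ω̃), x ∈ Ω, t ∈ [0,1]}`. -/
def XCset {d : ℕ} (Ω : Set (E d)) (C σ : ℝ) :
    Set (ProbabilityMeasure (E d × ℝ) × E d) :=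
  {p | ∃ μ : ProbabilityMeasure (E d × ℝ), IsLipCtx Ω C σ μ.toMeasure ∧
      ∃ t ∈ Icc (0:ℝ) 1, ∃ x ∈ Ω, p = (maskedP μ t, x)}

/-- Deep masked transformers `F_{ξ_L} ⋄ Γ_{θ_L} ⋄ ⋯ ⋄ F_{ξ_1} ⋄ Γ_{θ_1}` with masked
attentions of token dimension `≤ dmax`, head and key dimensions `1`, and `≤ Hmax`
heads. -/
inductive IsMaskedChain (dmax Hmax : ℕ) : {m m' : ℕ} → STMap m m' → Prop
  | base {m m' H : ℕ} (hm : m ≤ dmax) (hH : H ≤ Hmax)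
      (θ : AttentionParams m 1 1 H) (F : E m → E m') :
      IsMaskedChain dmax Hmax (stComp (stCtxFree F) (maskedAttention θ))
  | step {m m' m'' H : ℕ} {T : STMap m m'} (hT : IsMaskedChain dmax Hmax T)
      (hm : m' ≤ dmax) (hH : H ≤ Hmax)
      (θ : AttentionParams m' 1 1 H) (F : E m' → E m'') :
      IsMaskedChain dmax Hmax (stComp (stCtxFree F) (stComp (maskedAttention θ) T))

/-- Reduced in-context maps `(ν, x) ↦ Λ̄(ν, x)`. -/
abbrev RMap (m m' : ℕ) : Type := Measure (E m × ℝ) → E m → E m'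

/-- Composition of reduced maps; the push-forward keeps the time fixed. -/
def rComp {m m' m'' : ℕ} (R₂ : RMap m' m'') (R₁ : RMap m m') : RMap m m'' :=
  fun ν x => R₂ (ν.map fun q => (R₁ ν q.1, q.2)) (R₁ ν x)

/-- Context-free tokenwise layer as a reduced map. -/
def rCtxFree {m m' : ℕ} (F : E m → E m') : RMap m m' := fun _ x => F x

/-- Reduced map `Γ̄_θ(ν, x) = Γ_θ(ν, x, e(ν̄))` of the masked attention. -/
def reducedAttention {m dh k H : ℕ} (θ : AttentionParams m dh k H) : RMap m m :=
  fun ν x => maskedAttention θ ν (x, timeEnd ν)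

/-- Deep transformers built from reduced masked attentions and context-free layers. -/
inductive IsReducedChain (dmax Hmax : ℕ) : {m m' : ℕ} → RMap m m' → Prop
  | base {m m' H : ℕ} (hm : m ≤ dmax) (hH : H ≤ Hmax)
      (θ : AttentionParams m 1 1 H) (F : E m → E m') :
      IsReducedChain dmax Hmax (rComp (rCtxFree F) (reducedAttention θ))
  | step {m m' m'' H : ℕ} {T : RMap m m'} (hT : IsReducedChain dmax Hmax T)
      (hm : m' ≤ dmax) (hH : H ≤ Hmax)
      (θ : AttentionParams m' 1 1 H) (F : E m' → E m'') :
      IsReducedChain dmax Hmax (rComp (rCtxFree F) (rComp (reducedAttention θ) T))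

end


section LaplaceAux

open Real

variable {X : Type*} [MeasurableSpace X] [TopologicalSpace X] [CompactSpace X] [BorelSpace X]
  [T2Space X]

omit [T2Space X] in
lemma laplaceAux_integrable (μ : Measure X) [IsFiniteMeasure μ] {f : X → ℝ} (hf : Continuous f) :
    Integrable f μ :=
  hf.integrable_of_hasCompactSupport (HasCompactSupport.of_compactSpace f)

lemma laplaceAux_hasDerivAt (μ : Measure X) [IsProbabilityMeasure μ] {g : X → ℝ}
    (hg : Continuous g) {M : ℝ} (hM : ∀ x, |g x| ≤ M) (c : ℝ) :
    HasDerivAt (fun t => ∫ x, exp (t * g x) ∂μ) (∫ x, exp (c * g x) * g x ∂μ) c := by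
  have hmeas : ∀ t : ℝ, AEStronglyMeasurable (fun x => exp (t * g x)) μ :=
    fun t => ((Real.continuous_exp.comp (continuous_const.mul hg))).aestronglyMeasurable
  refine (hasDerivAt_integral_of_dominated_loc_of_deriv_le (F := fun t x => exp (t * g x))
    (F' := fun t x => exp (t * g x) * g x) (bound := fun _ => exp ((|c| + 1) * M) * M)
    (Metric.ball_mem_nhds c one_pos) (Eventually.of_forall hmeas) (laplaceAux_integrable μ (by continuity))
    ((Real.continuous_exp.comp (continuous_const.mul hg)).mul hg).aestronglyMeasurable
    ?_ (integrable_const _) ?_).2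
  · refine Eventually.of_forall fun x => fun t ht => ?_
    have h1 : |g x| ≤ M := hM x
    have h2 : |t| ≤ |c| + 1 := by
      have h3 : |t - c| < 1 := mem_ball_iff_norm.mp ht
      calc |t| = |t - c + c| := by ring_nf
        _ ≤ |t - c| + |c| := abs_add_le _ _
        _ ≤ |c| + 1 := by linarith
    have hexp : exp (t * g x) ≤ exp ((|c| + 1) * M) := by
      apply Real.exp_le_exp.mpr
      calc t * g x ≤ |t * g x| := le_abs_self _
        _ = |t| * |g x| := abs_mul _ _
        _ ≤ (|c| + 1) * M := mul_le_mul h2 h1 (abs_nonneg _) (by positivity)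
    calc ‖exp (t * g x) * g x‖ = exp (t * g x) * |g x| := by
          rw [norm_mul, Real.norm_eq_abs, Real.norm_eq_abs, abs_of_pos (Real.exp_pos _)]
      _ ≤ exp ((|c| + 1) * M) * M :=
          mul_le_mul hexp h1 (abs_nonneg _) (Real.exp_pos _).le
  · refine Eventually.of_forall fun x => fun t _ => ?_
    simpa using ((hasDerivAt_id t).mul_const (g x)).exp

lemma laplaceAux_pos (μ : Measure X) [IsProbabilityMeasure μ] {g : X → ℝ} (hg : Continuous g)
    {M : ℝ} (hM : ∀ x, |g x| ≤ M) (c : ℝ) : 0 < ∫ x, exp (c * g x) ∂μ := by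
  have hle : ∀ x, exp (-(|c| * M)) ≤ exp (c * g x) := by
    intro x
    apply Real.exp_le_exp.mpr
    have habs : |c * g x| ≤ |c| * M := by
      rw [abs_mul]
      exact mul_le_mul_of_nonneg_left (hM x) (abs_nonneg c)
    linarith [neg_abs_le (c * g x)]
  calc (0:ℝ) < exp (-(|c| * M)) := Real.exp_pos _
    _ = ∫ _x, exp (-(|c| * M)) ∂μ := by simp
    _ ≤ ∫ x, exp (c * g x) ∂μ :=
        integral_mono (integrable_const _) (laplaceAux_integrable μ (by continuity)) hle

omit [CompactSpace X] [BorelSpace X] [T2Space X] in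
lemma laplaceAux_expInt_eq (μ ν : Measure X) [IsProbabilityMeasure μ] [IsProbabilityMeasure ν]
    [CompactSpace X] [BorelSpace X] [T2Space X]
    {g : X → ℝ} (hg : Continuous g) {M : ℝ} (hM : ∀ x, |g x| ≤ M)
    (h : ∀ c : ℝ, (∫ x, exp (c * g x) * g x ∂μ) / (∫ x, exp (c * g x) ∂μ) =
        (∫ x, exp (c * g x) * g x ∂ν) / (∫ x, exp (c * g x) ∂ν)) (c : ℝ) :
    ∫ x, exp (c * g x) ∂μ = ∫ x, exp (c * g x) ∂ν := by
  set G : ℝ → ℝ := fun t => ∫ x, exp (t * g x) ∂μ with hG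
  set K : ℝ → ℝ := fun t => ∫ x, exp (t * g x) ∂ν with hK
  have hGpos : ∀ t, 0 < G t := fun t => laplaceAux_pos μ hg hM t
  have hKpos : ∀ t, 0 < K t := fun t => laplaceAux_pos ν hg hM t
  have hd : ∀ t, HasDerivAt (fun s => G s / K s) 0 t := by
    intro t
    have h1 := laplaceAux_hasDerivAt μ hg hM t
    have h2 := laplaceAux_hasDerivAt ν hg hM t
    have hdiv := h1.div h2 (hKpos t).ne'
    refine hdiv.congr_deriv (Eq.symm ?_)
    have hnum : (∫ x, exp (t * g x) * g x ∂μ) * K t = (∫ x, exp (t * g x) * g x ∂ν) * G t := by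
      have hr := h t
      rw [div_eq_div_iff (hGpos t).ne' (hKpos t).ne'] at hr
      exact hr
    rw [eq_comm, div_eq_zero_iff]
    left; linarith [hnum]
  have hconst : G c / K c = G 0 / K 0 :=
    is_const_of_deriv_eq_zero (fun t => (hd t).differentiableAt)
      (fun t => (hd t).deriv) c 0
  have h0 : G 0 = 1 := by simp [hG]
  have h0' : K 0 = 1 := by simp [hK]
  rw [h0, h0', div_one] at hconst
  rw [div_eq_one_iff_eq (hKpos c).ne'] at hconst
  exact hconst

end LaplaceAux

section LaplaceSW

open Real

variable {d : ℕ}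

/-- exp of a linear functional, as a continuous map on `Ω`. -/
noncomputable def laplaceExpCM (Ω : Set (E d)) (a : E d) : C(Ω, ℝ) :=
  ⟨fun y => exp ⟪a, (y : E d)⟫, by
    exact Real.continuous_exp.comp (continuous_const.inner continuous_subtype_val)⟩

/-- The submonoid of exponentials. -/
noncomputable def laplaceExpSubmonoid (Ω : Set (E d)) : Submonoid C(Ω, ℝ) where
  carrier := {f | ∃ a : E d, f = laplaceExpCM Ω a}
  one_mem' := ⟨0, by ext y; simp [laplaceExpCM]⟩
  mul_mem' := by
    rintro f g ⟨a, rfl⟩ ⟨b, rfl⟩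
    exact ⟨a + b, by ext y; simp [laplaceExpCM, inner_add_left, Real.exp_add]⟩

lemma laplace_measure_ext_of_expInt {Ω : Set (E d)} (hΩ : IsCompact Ω) (μ ν : Measure Ω)
    [IsProbabilityMeasure μ] [IsProbabilityMeasure ν]
    (h : ∀ a : E d, ∫ y, exp ⟪a, (y : E d)⟫ ∂μ = ∫ y, exp ⟪a, (y : E d)⟫ ∂ν) :
    μ = ν := by
  haveI : CompactSpace Ω := isCompact_iff_compactSpace.mp hΩ
  set Z : Set C(Ω, ℝ) := {f | ∫ y, f y ∂μ = ∫ y, f y ∂ν} with hZ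
  have hZclosed : IsClosed Z := by
    have c1 : Continuous fun f : C(Ω, ℝ) => ∫ y, f y ∂μ := by
      refine LipschitzWith.continuous (K := 1) (LipschitzWith.of_dist_le_mul fun f g => ?_)
      rw [Real.dist_eq, ← integral_sub (laplaceAux_integrable μ f.continuous)
        (laplaceAux_integrable μ g.continuous), ← Real.norm_eq_abs]
      calc ‖∫ y, (f y - g y) ∂μ‖ ≤ dist f g * (μ Set.univ).toReal := by
            apply norm_integral_le_of_norm_le_const
            exact Eventually.of_forall fun y => by
              rw [← dist_eq_norm]; exact ContinuousMap.dist_apply_le_dist y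
        _ = 1 * dist f g := by simp [measure_univ]
    have c2 : Continuous fun f : C(Ω, ℝ) => ∫ y, f y ∂ν := by
      refine LipschitzWith.continuous (K := 1) (LipschitzWith.of_dist_le_mul fun f g => ?_)
      rw [Real.dist_eq, ← integral_sub (laplaceAux_integrable ν f.continuous)
        (laplaceAux_integrable ν g.continuous), ← Real.norm_eq_abs]
      calc ‖∫ y, (f y - g y) ∂ν‖ ≤ dist f g * (ν Set.univ).toReal := by
            apply norm_integral_le_of_norm_le_const
            exact Eventually.of_forall fun y => by
              rw [← dist_eq_norm]; exact ContinuousMap.dist_apply_le_dist y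
        _ = 1 * dist f g := by simp [measure_univ]
    exact isClosed_eq c1 c2
  set A : Subalgebra ℝ C(Ω, ℝ) :=
    Algebra.adjoin ℝ (laplaceExpSubmonoid Ω : Set C(Ω, ℝ)) with hA
  have hspan : ∀ f ∈ Submodule.span ℝ ((laplaceExpSubmonoid Ω : Set C(Ω, ℝ))),
      ∫ y, f y ∂μ = ∫ y, f y ∂ν := by
    intro f hf
    induction hf using Submodule.span_induction with
    | mem g hg =>
      obtain ⟨a, rfl⟩ := hg
      exact h a
    | zero => simp
    | add f g _ _ hf hg =>
      simp only [ContinuousMap.add_apply]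
      rw [integral_add (laplaceAux_integrable μ f.continuous)
        (laplaceAux_integrable μ g.continuous),
        integral_add (laplaceAux_integrable ν f.continuous)
        (laplaceAux_integrable ν g.continuous), hf, hg]
    | smul c f _ hf =>
      simp only [ContinuousMap.smul_apply, smul_eq_mul]
      rw [integral_const_mul, integral_const_mul, hf]
  have hAZ : (A : Set C(Ω, ℝ)) ⊆ Z := by
    intro f hf
    have hmem : f ∈ Submodule.span ℝ
        ((Submonoid.closure (laplaceExpSubmonoid Ω : Set C(Ω, ℝ)) : Submonoid _) :
          Set C(Ω, ℝ)) := by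
      rw [← Algebra.adjoin_eq_span]; exact hf
    rw [Submonoid.closure_eq] at hmem
    exact hspan f hmem
  have hsep : A.SeparatesPoints := by
    intro x y hxy
    have hxy' : (x : E d) ≠ (y : E d) := fun hc => hxy (Subtype.coe_injective hc)
    set a : E d := (x : E d) - (y : E d) with ha
    refine ⟨laplaceExpCM Ω a, ⟨laplaceExpCM Ω a, Algebra.subset_adjoin ⟨a, rfl⟩, rfl⟩, ?_⟩
    simp only [laplaceExpCM, ContinuousMap.coe_mk]
    intro hc
    have hinj := Real.exp_injective hc
    have h2 : ⟪a, (x : E d) - (y : E d)⟫ = 0 := by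
      rw [inner_sub_right]; linarith [hinj]
    rw [ha, real_inner_self_eq_norm_sq] at h2
    have h3 : ‖(x : E d) - (y : E d)‖ = 0 := by nlinarith [norm_nonneg ((x : E d) - (y : E d))]
    exact hxy' (sub_eq_zero.mp (norm_eq_zero.mp h3))
  have hdense : A.topologicalClosure = ⊤ :=
    ContinuousMap.subalgebra_topologicalClosure_eq_top_of_separatesPoints A hsep
  have hallZ : ∀ f : C(Ω, ℝ), f ∈ Z := by
    intro f
    have hmem : f ∈ A.topologicalClosure := by rw [hdense]; trivial
    have hcl : f ∈ closure (A : Set C(Ω, ℝ)) := hmem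
    exact hZclosed.closure_subset (closure_mono hAZ hcl)
  apply ext_of_forall_lintegral_eq_of_IsFiniteMeasure
  intro f
  have hfc : Continuous fun x : Ω => ((f x : NNReal) : ℝ) :=
    NNReal.continuous_coe.comp f.continuous
  have h1 : ∫⁻ x, (f x : ENNReal) ∂μ = ENNReal.ofReal (∫ x, ((f x : NNReal) : ℝ) ∂μ) :=
    lintegral_coe_eq_integral _ (laplaceAux_integrable μ hfc)
  have h2 : ∫⁻ x, (f x : ENNReal) ∂ν = ENNReal.ofReal (∫ x, ((f x : NNReal) : ℝ) ∂ν) :=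
    lintegral_coe_eq_integral _ (laplaceAux_integrable ν hfc)
  rw [h1, h2]
  exact congrArg ENNReal.ofReal (hallZ ⟨fun x => ((f x : NNReal) : ℝ), hfc⟩)

end LaplaceSW

/-- **Injectivity of the generalized Laplace-like transform.** If two Borel probability
measures `μ, ν` on a compact `Ω ⊆ ℝ^d` satisfy `L(μ)(a, c) = L(ν)(a, c)` for all
`a ∈ ℝ^d`, `c ∈ ℝ`, where
`L(μ)(a, c) = (∫ e^{c⟨a,y⟩} ⟨a,y⟩ dμ(y)) / (∫ e^{c⟨a,z⟩} dμ(z))`, then `μ = ν`. -/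
theorem laplace_injective {d : ℕ} (Ω : Set (E d)) (hΩ : IsCompact Ω)
    (μ ν : Measure Ω) [IsProbabilityMeasure μ] [IsProbabilityMeasure ν]
    (h : ∀ (a : E d) (c : ℝ),
      (∫ y, Real.exp (c * ⟪a, (y : E d)⟫) * ⟪a, (y : E d)⟫ ∂μ) /
          (∫ z, Real.exp (c * ⟪a, (z : E d)⟫) ∂μ) =
        (∫ y, Real.exp (c * ⟪a, (y : E d)⟫) * ⟪a, (y : E d)⟫ ∂ν) /
          (∫ z, Real.exp (c * ⟪a, (z : E d)⟫) ∂ν)) :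
    μ = ν := by
  haveI : CompactSpace Ω := isCompact_iff_compactSpace.mp hΩ
  apply laplace_measure_ext_of_expInt hΩ
  intro a
  obtain ⟨R, hR⟩ := hΩ.isBounded.exists_norm_le
  have hg : Continuous fun y : Ω => ⟪a, (y : E d)⟫ :=
    continuous_const.inner continuous_subtype_val
  have hM : ∀ y : Ω, |⟪a, (y : E d)⟫| ≤ ‖a‖ * R := fun y =>
    (abs_real_inner_le_norm a _).trans (mul_le_mul_of_nonneg_left (hR _ y.2) (norm_nonneg a))
  simpa using laplaceAux_expInt_eq μ ν hg hM (h a) 1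
end

section
/- Let Ω ⊂ ℝ be a compact set and let μ, ν be Borel probability measures on Ω. If L₁(μ)(c) = L₁(ν)(c) for every c ∈ ℝ, then μ = ν, where L₁(μ)(c) = ∫ e^{cy} y dμ(y) / ∫ e^{cz} dμ(z). -/
open MeasureTheory Set Filter
open scoped ENNReal RealInnerProductSpace BigOperators Topology

/-- **Injectivity of the one-dimensional Laplace-like transform.** If two Borel
probability measures `μ, ν` on a compact `Ω ⊆ ℝ` satisfy `L₁(μ)(c) = L₁(ν)(c)` for all
`c ∈ ℝ`, where `L₁(μ)(c) = (∫ e^{cy} y dμ(y)) / (∫ e^{cz} dμ(z))`, then `μ = ν`. -/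
theorem laplace_injective_1d (Ω : Set ℝ) (hΩ : IsCompact Ω)
    (μ ν : Measure Ω) [IsProbabilityMeasure μ] [IsProbabilityMeasure ν]
    (h : ∀ c : ℝ,
      (∫ y, Real.exp (c * (y : ℝ)) * (y : ℝ) ∂μ) / (∫ z, Real.exp (c * (z : ℝ)) ∂μ) =
        (∫ y, Real.exp (c * (y : ℝ)) * (y : ℝ) ∂ν) / (∫ z, Real.exp (c * (z : ℝ)) ∂ν)) :
    μ = ν := by
  haveI : CompactSpace Ω := isCompact_iff_compactSpace.mp hΩ
  obtain ⟨r, hr⟩ := hΩ.isBounded.subset_closedBall 0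
  set R : ℝ := max r 0 with hRdef
  have hR : ∀ y : Ω, |(y : ℝ)| ≤ R := fun y =>
    le_trans (by simpa [Real.norm_eq_abs] using mem_closedBall_zero_iff.mp (hr y.2))
      (le_max_left _ _)
  have hR0 : (0:ℝ) ≤ R := le_max_right _ _
  -- continuity of the exponential integrands
  have hcont : ∀ c : ℝ, Continuous (fun y : Ω => Real.exp (c * (y : ℝ))) := fun c =>
    Real.continuous_exp.comp (continuous_const.mul continuous_subtype_val)
  have hcont' : ∀ c : ℝ, Continuous (fun y : Ω => Real.exp (c * (y : ℝ)) * (y : ℝ)) := fun c =>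
    (hcont c).mul continuous_subtype_val
  -- integrability of continuous functions
  have hint : ∀ (ρ : Measure Ω) [IsProbabilityMeasure ρ] (f : Ω → ℝ), Continuous f →
      Integrable f ρ := by
    intro ρ _ f hf
    exact hf.integrable_of_hasCompactSupport ((isClosed_tsupport f).isCompact)
  -- positivity of the denominators
  have hpos : ∀ (ρ : Measure Ω) [IsProbabilityMeasure ρ] (c : ℝ),
      0 < ∫ y, Real.exp (c * (y : ℝ)) ∂ρ := by
    intro ρ _ c
    have h1 : ∀ y : Ω, Real.exp (-(|c| * R)) ≤ Real.exp (c * (y : ℝ)) := by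
      intro y
      apply Real.exp_le_exp.mpr
      have h2 : |c * (y : ℝ)| ≤ |c| * R := by
        rw [abs_mul]
        exact mul_le_mul_of_nonneg_left (hR y) (abs_nonneg c)
      linarith [neg_abs_le (c * (y : ℝ))]
    calc (0:ℝ) < Real.exp (-(|c| * R)) := Real.exp_pos _
      _ = ∫ _ : Ω, Real.exp (-(|c| * R)) ∂ρ := by simp
      _ ≤ ∫ y, Real.exp (c * (y : ℝ)) ∂ρ :=
          integral_mono (integrable_const _) (hint ρ _ (hcont c)) h1
  -- differentiability of the denominators, derivative is the numerator
  have hderiv : ∀ (ρ : Measure Ω) [IsProbabilityMeasure ρ] (c : ℝ),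
      HasDerivAt (fun c => ∫ y, Real.exp (c * (y : ℝ)) ∂ρ)
        (∫ y, Real.exp (c * (y : ℝ)) * (y : ℝ) ∂ρ) c := by
    intro ρ _ c
    have key := hasDerivAt_integral_of_dominated_loc_of_deriv_le
      (F := fun (c : ℝ) (y : Ω) => Real.exp (c * (y : ℝ)))
      (F' := fun (c : ℝ) (y : Ω) => Real.exp (c * (y : ℝ)) * (y : ℝ))
      (x₀ := c) (bound := fun _ => Real.exp ((|c| + 1) * R) * R)
      (μ := ρ) (s := Metric.ball c 1) (Metric.ball_mem_nhds c zero_lt_one)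
      (Eventually.of_forall fun x => ((hcont x).measurable).aestronglyMeasurable)
      (hint ρ _ (hcont c)) ((hcont' c).measurable.aestronglyMeasurable)
      (Eventually.of_forall ?_) (integrable_const _)
      (Eventually.of_forall ?_)
    · exact key.2
    · intro y x hx
      have hxb : |x| ≤ |c| + 1 := by
        have := mem_ball_iff_norm.mp hx
        have h3 : |x - c| < 1 := by simpa [Real.norm_eq_abs] using this
        calc |x| = |c + (x - c)| := by ring_nf
          _ ≤ |c| + |x - c| := abs_add_le _ _
          _ ≤ |c| + 1 := by linarith
      have h4 : x * (y : ℝ) ≤ (|c| + 1) * R := by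
        calc x * (y : ℝ) ≤ |x * (y : ℝ)| := le_abs_self _
          _ = |x| * |(y : ℝ)| := abs_mul _ _
          _ ≤ (|c| + 1) * R := by
              apply mul_le_mul hxb (hR y) (abs_nonneg _); linarith [abs_nonneg c]
      calc ‖Real.exp (x * (y : ℝ)) * (y : ℝ)‖
          = Real.exp (x * (y : ℝ)) * |(y : ℝ)| := by
            rw [norm_mul, Real.norm_eq_abs, Real.norm_eq_abs, abs_of_pos (Real.exp_pos _)]
        _ ≤ Real.exp ((|c| + 1) * R) * R := by
            apply mul_le_mul (Real.exp_le_exp.mpr h4) (hR y) (abs_nonneg _)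
              (Real.exp_pos _).le
    · intro y x _
      simpa [mul_comm] using ((hasDerivAt_mul_const (y : ℝ)).exp (x := x))
  -- the two denominators agree
  have hexp : ∀ c : ℝ, ∫ y, Real.exp (c * (y : ℝ)) ∂μ = ∫ y, Real.exp (c * (y : ℝ)) ∂ν := by
    set f : ℝ → ℝ := fun c => ∫ y, Real.exp (c * (y : ℝ)) ∂μ with hf
    set g : ℝ → ℝ := fun c => ∫ y, Real.exp (c * (y : ℝ)) ∂ν with hg
    have hfpos : ∀ c, 0 < f c := hpos μ
    have hgpos : ∀ c, 0 < g c := hpos ν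
    have hq : ∀ c, HasDerivAt (fun c => f c / g c) 0 c := by
      intro c
      have h1 := (hderiv μ c).div (hderiv ν c) (hgpos c).ne'
      have h2 : (∫ y, Real.exp (c * (y : ℝ)) * (y : ℝ) ∂μ) * g c
          = (∫ y, Real.exp (c * (y : ℝ)) * (y : ℝ) ∂ν) * f c :=
        (div_eq_div_iff (hfpos c).ne' (hgpos c).ne').mp (h c)
      have h3 : ((∫ y, Real.exp (c * (y : ℝ)) * (y : ℝ) ∂μ) * g c -
          f c * (∫ y, Real.exp (c * (y : ℝ)) * (y : ℝ) ∂ν)) / g c ^ 2 = 0 := by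
        rw [h2]; ring
      rwa [h3] at h1
    have hconst : ∀ c : ℝ, f c / g c = f 0 / g 0 := by
      intro c
      exact is_const_of_deriv_eq_zero (fun x => (hq x).differentiableAt)
        (fun x => (hq x).deriv) c 0
    have h0 : f 0 = 1 ∧ g 0 = 1 := by constructor <;> simp [hf, hg]
    intro c
    have := hconst c
    rw [h0.1, h0.2, div_one] at this
    have := (div_eq_one_iff_eq (hgpos c).ne').mp this
    exact this
  -- Stone-Weierstrass: integrals of all continuous functions agree
  let Ecm : ℝ → C(Ω, ℝ) := fun c => ⟨fun y => Real.exp (c * (y : ℝ)), hcont c⟩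
  have hEmul : ∀ a b : ℝ, Ecm a * Ecm b = Ecm (a + b) := by
    intro a b
    ext y
    simp [Ecm, ← Real.exp_add, add_mul]
  have hEone : Ecm 0 = 1 := by ext y; simp [Ecm]
  let M : Submonoid C(Ω, ℝ) :=
    { carrier := Set.range Ecm
      one_mem' := ⟨0, hEone⟩
      mul_mem' := by rintro _ _ ⟨a, rfl⟩ ⟨b, rfl⟩; exact ⟨a + b, (hEmul a b).symm⟩ }
  set A : Subalgebra ℝ C(Ω, ℝ) := Algebra.adjoin ℝ (Set.range Ecm) with hAdef
  have hsep : A.SeparatesPoints := by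
    intro x y hxy
    refine ⟨_, ⟨Ecm 1, Algebra.subset_adjoin ⟨1, rfl⟩, rfl⟩, ?_⟩
    simp only [Ecm, ContinuousMap.coe_mk, one_mul]
    intro hc
    exact hxy (Subtype.ext (Real.exp_injective hc))
  have hA : A.topologicalClosure = ⊤ :=
    ContinuousMap.subalgebra_topologicalClosure_eq_top_of_separatesPoints A hsep
  have key : ∀ f : C(Ω, ℝ), ∫ y, f y ∂μ = ∫ y, f y ∂ν := by
    have hS_closed : IsClosed {g : C(Ω, ℝ) | ∫ y, g y ∂μ = ∫ y, g y ∂ν} := by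
      have hlip : LipschitzWith 2 (fun g : C(Ω, ℝ) => (∫ y, g y ∂μ) - ∫ y, g y ∂ν) := by
        apply LipschitzWith.of_dist_le_mul
        intro g₁ g₂
        have hi : ∀ (ρ : Measure Ω) [IsProbabilityMeasure ρ],
            |(∫ y, g₁ y ∂ρ) - ∫ y, g₂ y ∂ρ| ≤ ‖g₁ - g₂‖ := by
          intro ρ _
          rw [← integral_sub (hint ρ _ g₁.continuous) (hint ρ _ g₂.continuous)]
          have := norm_integral_le_of_norm_le_const (μ := ρ)
            (f := fun y => g₁ y - g₂ y) (C := ‖g₁ - g₂‖)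
            (Eventually.of_forall fun y => by
              simpa using (g₁ - g₂).norm_coe_le_norm y)
          simpa [Real.norm_eq_abs] using this
        rw [dist_eq_norm, dist_eq_norm, Real.norm_eq_abs]
        calc |((∫ y, g₁ y ∂μ) - ∫ y, g₁ y ∂ν) - ((∫ y, g₂ y ∂μ) - ∫ y, g₂ y ∂ν)|
            = |((∫ y, g₁ y ∂μ) - ∫ y, g₂ y ∂μ) - ((∫ y, g₁ y ∂ν) - ∫ y, g₂ y ∂ν)| := by
              ring_nf
          _ ≤ |(∫ y, g₁ y ∂μ) - ∫ y, g₂ y ∂μ| + |(∫ y, g₁ y ∂ν) - ∫ y, g₂ y ∂ν| :=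
              abs_sub _ _
          _ ≤ ‖g₁ - g₂‖ + ‖g₁ - g₂‖ := add_le_add (hi μ) (hi ν)
          _ = 2 * ‖g₁ - g₂‖ := by ring
      have : {g : C(Ω, ℝ) | ∫ y, g y ∂μ = ∫ y, g y ∂ν} =
          (fun g : C(Ω, ℝ) => (∫ y, g y ∂μ) - ∫ y, g y ∂ν) ⁻¹' {0} := by
        ext g; simp [sub_eq_zero]
      rw [this]
      exact IsClosed.preimage hlip.continuous isClosed_singleton
    have hsub : (A : Set C(Ω, ℝ)) ⊆ {g : C(Ω, ℝ) | ∫ y, g y ∂μ = ∫ y, g y ∂ν} := by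
      intro g hg
      have hgspan : g ∈ Submodule.span ℝ ((Submonoid.closure (Set.range Ecm) : Submonoid C(Ω, ℝ)) : Set C(Ω, ℝ)) := by
        have := Algebra.adjoin_eq_span (R := ℝ) (s := Set.range Ecm)
        rw [hAdef] at hg
        have : g ∈ Subalgebra.toSubmodule (Algebra.adjoin ℝ (Set.range Ecm)) := hg
        rwa [Algebra.adjoin_eq_span] at this
      have hclos : ((Submonoid.closure (Set.range Ecm) : Submonoid C(Ω, ℝ)) : Set C(Ω, ℝ)) ⊆
          Set.range Ecm := by
        intro x hx
        exact (Submonoid.closure_le (S := M)).mpr subset_rfl hx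
      clear hg
      show ∫ z, g z ∂μ = ∫ z, g z ∂ν
      induction hgspan using Submodule.span_induction with
      | mem x hx =>
          obtain ⟨c, rfl⟩ := hclos hx
          exact hexp c
      | zero => simp
      | add x y _ _ hx hy =>
          have hx' : ∫ z, x z ∂μ = ∫ z, x z ∂ν := hx
          have hy' : ∫ z, y z ∂μ = ∫ z, y z ∂ν := hy
          show ∫ z, (x + y) z ∂μ = ∫ z, (x + y) z ∂ν
          simp only [ContinuousMap.add_apply]
          rw [integral_add (hint μ _ x.continuous) (hint μ _ y.continuous),
            integral_add (hint ν _ x.continuous) (hint ν _ y.continuous), hx', hy']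
      | smul r x _ hx =>
          have hx' : ∫ z, x z ∂μ = ∫ z, x z ∂ν := hx
          show ∫ z, (r • x) z ∂μ = ∫ z, (r • x) z ∂ν
          simp only [ContinuousMap.smul_apply, smul_eq_mul]
          rw [integral_const_mul, integral_const_mul, hx']
    intro f
    have hf : f ∈ closure (A : Set C(Ω, ℝ)) := by
      have : f ∈ A.topologicalClosure := hA ▸ Algebra.mem_top
      rwa [← SetLike.mem_coe, Subalgebra.topologicalClosure_coe] at this
    exact closure_minimal hsub hS_closed hf
  -- conclude
  apply ext_of_forall_lintegral_eq_of_IsFiniteMeasure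
  intro f
  have h1 : ∫ x, ((f x : NNReal) : ℝ) ∂μ = ∫ x, ((f x : NNReal) : ℝ) ∂ν :=
    key ⟨fun x => ((f x : NNReal) : ℝ), NNReal.continuous_coe.comp f.continuous⟩
  have h2 := BoundedContinuousFunction.toReal_lintegral_coe_eq_integral f μ
  have h3 := BoundedContinuousFunction.toReal_lintegral_coe_eq_integral f ν
  have h4 : (∫⁻ x, (f x : ℝ≥0∞) ∂μ).toReal = (∫⁻ x, (f x : ℝ≥0∞) ∂ν).toReal := by
    rw [h2, h3]; exact h1
  exact (ENNReal.toReal_eq_toReal_iff'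
    (BoundedContinuousFunction.lintegral_lt_top_of_nnreal μ f).ne
    (BoundedContinuousFunction.lintegral_lt_top_of_nnreal ν f).ne).mp h4
end

section
/- Let Ω̃ = Ω × [0,1] with Ω ⊂ ℝ^d compact, let C > 0 and σ ∈ (0,1), and let Γ₁ be a causal space-time in-context map with values in ℝ^d. Then for every μ ∈ Lip_C^σ(Ω̃) and every t ∈ [0,1], the masked measure of the push-forward equals the push-forward of the masked measure: [(Γ₁(μ), Id)_♯ μ]_t = (Γ₁(μ_t), Id)_♯ μ_t, where (Γ₁(μ), Id)(x, s) = (Γ₁(μ, x, s), s) and the masking of the pushed-forward measure is taken with respect to its time marginal (which coincides with μ̄). -/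
open MeasureTheory Set Filter
open scoped ENNReal RealInnerProductSpace BigOperators Topology

noncomputable section AuxMasked

variable {m : ℕ}

lemma Sset_meas (t : ℝ) : MeasurableSet ((univ : Set (E m)) ×ˢ Icc (0:ℝ) t) :=
  MeasurableSet.univ.prod measurableSet_Icc

lemma Sset_eq (t : ℝ) : ((univ : Set (E m)) ×ˢ Icc (0:ℝ) t) = Prod.snd ⁻¹' Icc (0:ℝ) t :=
  Set.univ_prod

lemma timeMarg_apply (μ : Measure (E m × ℝ)) {A : Set ℝ} (hA : MeasurableSet A) :
    timeMarg μ A = μ (Prod.snd ⁻¹' A) := Measure.map_apply measurable_snd hA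

/-- The mass of `[0, t]` is at least `σ` for a measure in `Lip_C^σ`. -/
lemma mass_lb {Ω : Set (E m)} {C σ : ℝ} {μ : Measure (E m × ℝ)}
    (h : IsLipCtx Ω C σ μ) {t : ℝ} (ht : 0 ≤ t) :
    ENNReal.ofReal σ ≤ μ (univ ×ˢ Icc 0 t) := by
  refine le_trans h.2.2.1 ?_
  rw [timeMarg_apply μ (measurableSet_singleton 0)]
  refine measure_mono ?_
  rw [Sset_eq]
  exact Set.preimage_mono (by simpa using ht)

lemma mass_ne_zero {Ω : Set (E m)} {C σ : ℝ} (hσ : 0 < σ) {μ : Measure (E m × ℝ)}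
    (h : IsLipCtx Ω C σ μ) {t : ℝ} (ht : 0 ≤ t) :
    μ (univ ×ˢ Icc 0 t) ≠ 0 := by
  intro h0
  have := mass_lb h ht
  rw [h0, nonpos_iff_eq_zero, ENNReal.ofReal_eq_zero] at this
  linarith

/-- Tower property of masking: `(μ_t)_s = μ_s` for `s ≤ t`. -/
lemma maskedM_maskedM (μ : Measure (E m × ℝ)) {s t : ℝ} (hst : s ≤ t)
    (hc0 : μ (univ ×ˢ Icc 0 t) ≠ 0) (hcT : μ (univ ×ˢ Icc 0 t) ≠ ∞) :
    maskedM (maskedM μ t) s = maskedM μ s := by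
  set c := μ (univ ×ˢ Icc 0 t) with hc
  have hsub : ((univ : Set (E m)) ×ˢ Icc (0:ℝ) s) ⊆ univ ×ˢ Icc (0:ℝ) t :=
    Set.prod_mono (subset_refl _) (Icc_subset_Icc le_rfl hst)
  have happ : (maskedM μ t) (univ ×ˢ Icc 0 s) = c⁻¹ * μ (univ ×ˢ Icc 0 s) := by
    rw [maskedM, Measure.smul_apply, Measure.restrict_apply (Sset_meas s),
      Set.inter_eq_self_of_subset_left hsub, smul_eq_mul]
  have hres : (maskedM μ t).restrict (univ ×ˢ Icc 0 s)
      = c⁻¹ • μ.restrict (univ ×ˢ Icc 0 s) := by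
    rw [maskedM, Measure.restrict_smul, Measure.restrict_restrict (Sset_meas s),
      Set.inter_eq_self_of_subset_left hsub]
  rw [maskedM, happ, hres, smul_smul, maskedM]
  congr 1
  rw [ENNReal.mul_inv (Or.inl (ENNReal.inv_ne_zero.mpr hcT)) (Or.inl (ENNReal.inv_ne_top.mpr hc0)),
    inv_inv, mul_comm c _, mul_assoc, ENNReal.mul_inv_cancel hc0 hcT, mul_one]

/-- Masking preserves membership in `Lip_C^σ`. -/
lemma isLipCtx_maskedM {Ω : Set (E m)} {C σ : ℝ} (hσ : 0 < σ)
    {μ : Measure (E m × ℝ)} (h : IsLipCtx Ω C σ μ) {t : ℝ} (ht : t ∈ Icc (0:ℝ) 1) :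
    IsLipCtx Ω C σ (maskedM μ t) := by
  obtain ⟨hprob, hsupp, hσ0, κ, hκm, hκp, hκΩ, hdis, hlip⟩ := h
  have hLip : IsLipCtx Ω C σ μ := ⟨hprob, hsupp, hσ0, κ, hκm, hκp, hκΩ, hdis, hlip⟩
  set S := ((univ : Set (E m)) ×ˢ Icc (0:ℝ) t) with hS
  set c := μ S with hc
  have hc0 : c ≠ 0 := mass_ne_zero hσ hLip ht.1
  have hc1 : c ≤ 1 := prob_le_one
  have hcT : c ≠ ∞ := fun hcon => by simp [hcon] at hc1
  set ν := maskedM μ t with hν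
  have hνapp : ∀ A : Set (E m × ℝ), MeasurableSet A → ν A = c⁻¹ * μ (A ∩ S) := by
    intro A hA
    rw [hν, maskedM, Measure.smul_apply, Measure.restrict_apply hA, smul_eq_mul]
  -- probability measure
  have hνprob : IsProbabilityMeasure ν := by
    constructor
    rw [hνapp _ MeasurableSet.univ, Set.univ_inter, ← hc, ENNReal.inv_mul_cancel hc0 hcT]
  refine ⟨hνprob, ?_, ?_, κ, hκm, hκp, hκΩ, ?_, ?_⟩
  · -- support
    have h1 : ν ((Ω ×ˢ Icc (0:ℝ) 1)ᶜ) ≤ c⁻¹ * μ ((Ω ×ˢ Icc (0:ℝ) 1)ᶜ) := by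
      rw [hν, maskedM, Measure.smul_apply, smul_eq_mul]
      exact mul_le_mul_right (Measure.restrict_apply_le _ _) _
    rw [hsupp, mul_zero] at h1
    exact le_antisymm h1 zero_le
  · -- mass at time 0
    have h0t : Prod.snd ⁻¹' ({0} : Set ℝ) ⊆ S := by
      rw [hS, Sset_eq]; exact Set.preimage_mono (by simpa using ht.1)
    have : timeMarg ν {0} = c⁻¹ * μ (Prod.snd ⁻¹' ({0} : Set ℝ)) := by
      rw [timeMarg_apply ν (measurableSet_singleton 0),
        hνapp _ (measurable_snd (measurableSet_singleton 0)),
        Set.inter_eq_self_of_subset_left h0t]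
    rw [this]
    calc ENNReal.ofReal σ ≤ μ (Prod.snd ⁻¹' ({0} : Set ℝ)) := by
          rw [← timeMarg_apply μ (measurableSet_singleton 0)]; exact hσ0
      _ ≤ c⁻¹ * μ (Prod.snd ⁻¹' ({0} : Set ℝ)) :=
          le_mul_of_one_le_left zero_le (ENNReal.one_le_inv.mpr hc1)
  · -- disintegration
    set g : ℝ → Measure (E m × ℝ) := fun s => (κ s).map fun x => (x, s) with hg
    have hgmeas : Measurable g := by
      refine Measure.measurable_of_measurable_coe g fun B hB => ?_
      have : ∀ s, g s B = κ s ((fun x => (x, s)) ⁻¹' B) := fun s =>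
        Measure.map_apply measurable_prodMk_right hB
      simp_rw [this]
      set K : ProbabilityTheory.Kernel ℝ (E m) := ⟨κ, hκm⟩ with hK
      haveI : ProbabilityTheory.IsMarkovKernel K := ⟨hκp⟩
      exact ProbabilityTheory.Kernel.measurable_kernel_prodMk_right (κ := K) hB
    have htm : timeMarg ν = c⁻¹ • (timeMarg μ).restrict (Icc 0 t) := by
      refine Measure.ext fun B hB => ?_
      rw [timeMarg_apply ν hB, hνapp _ (measurable_snd hB), Measure.smul_apply,
        Measure.restrict_apply hB, smul_eq_mul, timeMarg_apply μ (hB.inter measurableSet_Icc)]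
      congr 2
      rw [hS, Sset_eq, ← Set.preimage_inter]
    refine Measure.ext fun A hA => ?_
    have hkey : ∀ s, g s (A ∩ S) = (Icc (0:ℝ) t).indicator (fun s => g s A) s := by
      intro s
      rw [hg]
      simp only
      rw [Measure.map_apply measurable_prodMk_right (hA.inter (Sset_meas t)),
        Set.preimage_inter]
      by_cases hs : s ∈ Icc (0:ℝ) t
      · have hpre : ((fun x : E m => (x, s)) ⁻¹' S) = univ := by
          ext x; simp [hS, hs]
        rw [hpre, Set.inter_univ, Set.indicator_of_mem hs,
          Measure.map_apply measurable_prodMk_right hA]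
      · have hpre : ((fun x : E m => (x, s)) ⁻¹' S) = ∅ := by
          ext x; simp [hS, hs]
        rw [hpre, Set.inter_empty, measure_empty, Set.indicator_of_notMem hs]
    calc ν A = c⁻¹ * μ (A ∩ S) := hνapp A hA
      _ = c⁻¹ * ∫⁻ s, g s (A ∩ S) ∂(timeMarg μ) := by
          conv_lhs => rw [hdis]
          rw [Measure.bind_apply (hA.inter (Sset_meas t)) hgmeas.aemeasurable]
      _ = c⁻¹ * ∫⁻ s in Icc (0:ℝ) t, g s A ∂(timeMarg μ) := by
          rw [funext hkey, lintegral_indicator measurableSet_Icc]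
      _ = ∫⁻ s, g s A ∂(timeMarg ν) := by
          rw [htm, lintegral_smul_measure, smul_eq_mul]
      _ = (timeMarg ν).bind g A := (Measure.bind_apply hA hgmeas.aemeasurable).symm
  · exact hlip

end AuxMasked

/-- **Masking commutes with causal push-forward.** For a causal space-time in-context map
`Γ₁` with values in `ℝ^d`, every `μ ∈ Lip_C^σ(Ω̃)` and every `t ∈ [0,1]`, the masked
measure of the push-forward equals the push-forward of the masked measure:
`[(Γ₁(μ), Id)♯μ]_t = (Γ₁(μ_t), Id)♯μ_t`. -/
theorem masked_pushforward_comm {d : ℕ} (Ω : Set (E d)) (hΩ : IsCompact Ω)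
    {C σ : ℝ} (hC : 0 < C) (hσ : σ ∈ Ioo (0:ℝ) 1)
    (Γ₁ : STMap d d) (hcausal : IsCausalM Ω C σ Γ₁)
    (hmeas : ∀ ν : Measure (E d × ℝ), Measurable fun q : E d × ℝ => (Γ₁ ν q, q.2)) :
    ∀ μ : Measure (E d × ℝ), IsLipCtx Ω C σ μ → ∀ t ∈ Icc (0:ℝ) 1,
      maskedM (μ.map fun q => (Γ₁ μ q, q.2)) t
        = (maskedM μ t).map fun q => (Γ₁ (maskedM μ t) q, q.2) := by
  intro μ hμ t ht
  set f : Measure (E d × ℝ) → E d × ℝ → E d × ℝ := fun ν q => (Γ₁ ν q, q.2) with hf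
  set S := ((univ : Set (E d)) ×ˢ Icc (0:ℝ) t) with hS
  have hSm : MeasurableSet S := Sset_meas t
  have hprob : IsProbabilityMeasure μ := hμ.1
  have hc0 : μ S ≠ 0 := mass_ne_zero hσ.1 hμ ht.1
  have hcT : μ S ≠ ∞ := measure_ne_top μ S
  have hpre : ∀ ν, f ν ⁻¹' S = S := by
    intro ν; ext q; simp [hf, hS]
  -- masked measure is LipCtx
  have hνLip : IsLipCtx Ω C σ (maskedM μ t) := isLipCtx_maskedM hσ.1 hμ ht
  -- a.e. equality of the two push-forward maps on μ.restrict S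
  have hae : f μ =ᵐ[μ.restrict S] f (maskedM μ t) := by
    have h1 : ∀ᵐ q ∂(μ.restrict S), q ∈ S := ae_restrict_mem hSm
    have h2 : ∀ᵐ q ∂(μ.restrict S), q ∈ Ω ×ˢ Icc (0:ℝ) 1 := by
      refine mem_ae_iff.mpr (le_antisymm ?_ zero_le)
      exact le_trans (Measure.restrict_apply_le S ((Ω ×ˢ Icc (0:ℝ) 1)ᶜ)) hμ.2.1.le
    filter_upwards [h1, h2] with q hqS hqG
    obtain ⟨x, s⟩ := q
    have hxΩ : x ∈ Ω := hqG.1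
    have hs0 : 0 ≤ s := hqS.2.1
    have hst : s ≤ t := hqS.2.2
    have hs1 : s ∈ Icc (0:ℝ) 1 := ⟨hs0, le_trans hst ht.2⟩
    have e1 : Γ₁ μ (x, s) = Γ₁ (maskedM μ s) (x, s) := hcausal μ hμ x hxΩ s hs1
    have e2 : Γ₁ (maskedM μ t) (x, s) = Γ₁ (maskedM (maskedM μ t) s) (x, s) :=
      hcausal (maskedM μ t) hνLip x hxΩ s hs1
    have e3 : maskedM (maskedM μ t) s = maskedM μ s := maskedM_maskedM μ hst hc0 hcT
    simp only [hf]
    rw [e1, e2, e3]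
  -- compute both sides
  have hmass : (μ.map (f μ)) S = μ S := by
    rw [Measure.map_apply (hmeas μ) hSm, hpre]
  have hrest : (μ.map (f μ)).restrict S = (μ.restrict S).map (f μ) := by
    rw [Measure.restrict_map (hmeas μ) hSm, hpre]
  rw [maskedM, ← hS, hmass, hrest, Measure.map_congr hae]
  rw [maskedM, ← hS, Measure.map_smul]
end

section
/- Let Ω ⊂ ℝ^d be compact, let Φ : ℝ^{2d'} → ℝ^{d'} be any map, and let T, N ∈ ℕ and parameters (θ̃_{t,n}, ξ̃_{t,n}) be given, where F_{ξ̃_{t,n}}(x) = A_{t,n}x + b_{t,n} is affine from ℝ^d to ℝ^{d'} and Γ_{θ̃_{t,n}} is the multi-head attention with d_in = d', d_head = k = 1, H = d' whose h-th head has W̃^h = e_h, and Ṽ^h, Q̃^h, K̃^h supported on the h-th coordinate. Then there exist context-free tokenwise layers F_{ξ_0}, (F_{ξ_{t,n}})_{t∈[T],n∈[N]}, F_{ξ_*} (each built from affine maps and applications of Φ) and attention parameters θ_0, (θ_{t,n}), θ_* such that for all (μ, x) ∈ P(Ω) × Ω, G_Φ(μ, x) = F_{ξ_*} ⋄ Γ_{θ_*}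 ⋄ (⋄_{n=1}^N ⋄_{t=1}^T F_{ξ_{t,n}} ⋄ Γ_{θ_{t,n}}) ⋄ F_{ξ_0} ⋄ Γ_{θ_0}(μ, x) exactly, with d_in(θ_0) = d, d_head(θ_0) = k(θ_0) = H(θ_0) = 1; d_in(θ_{t,n}) = d + 3d', d_head(θ_{t,n}) = k(θ_{t,n}) = 1, H(θ_{t,n}) = d'; and d_in(θ_*) = d + 3d', d_head(θ_*) = k(θ_*) = H(θ_*) = 1. -/
open MeasureTheory Set Filter
open scoped ENNReal RealInnerProductSpace BigOperators Topology

noncomputable section ERAux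

open MeasureTheory
open scoped RealInnerProductSpace

namespace ER

/-! ### A Borel isomorphism used to encode a pair `(code, value)` into one real number. -/

def enc (d' : ℕ) : (ℝ × E d') ≃ᵐ ℝ :=
  PolishSpace.measurableEquivOfNotCountable
    (by
      intro h
      have h2 : Function.Injective (fun r : ℝ => ((r, 0) : ℝ × E d')) :=
        fun a b hab => congrArg Prod.fst hab
      exact (not_countable (α := ℝ)) h2.countable)
    (not_countable (α := ℝ))

/-! ### Coordinate continuous linear maps on token space -/

def cproj {n : ℕ} (i : Fin n) : E n →L[ℝ] ℝ :=
  (ContinuousLinearMap.proj i).comp (EuclideanSpace.equiv (Fin n) ℝ).toContinuousLinearMap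

@[simp] lemma cproj_apply {n : ℕ} (i : Fin n) (v : E n) : cproj i v = v i := rfl

variable {d d' : ℕ}

def Xproj (d d' : ℕ) : E (d + 3 * d') →L[ℝ] E d :=
  (EuclideanSpace.equiv (Fin d) ℝ).symm.toContinuousLinearMap.comp
    (ContinuousLinearMap.pi fun j : Fin d => cproj ⟨j.1, by omega⟩)

@[simp] lemma Xproj_apply (z : E (d + 3 * d')) (j : Fin d) :
    Xproj d d' z j = z ⟨j.1, by omega⟩ := rfl

def Pproj (d d' : ℕ) : E (d + 3 * d') →L[ℝ] E d' :=
  (EuclideanSpace.equiv (Fin d') ℝ).symm.toContinuousLinearMap.comp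
    (ContinuousLinearMap.pi fun h : Fin d' => cproj ⟨d + 2 + h.1, by omega⟩)

@[simp] lemma Pproj_apply (z : E (d + 3 * d')) (h : Fin d') :
    Pproj d d' z h = z ⟨d + 2 + h.1, by omega⟩ := rfl

def Pemb (d d' : ℕ) : E d' →L[ℝ] E (d + 3 * d') :=
  (EuclideanSpace.equiv (Fin (d + 3 * d')) ℝ).symm.toContinuousLinearMap.comp
    (ContinuousLinearMap.pi fun i : Fin (d + 3 * d') =>
      if h : d + 2 ≤ i.1 ∧ i.1 < d + 2 + d' then cproj ⟨i.1 - (d + 2), by omega⟩ else 0)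

lemma Pemb_apply (v : E d') (i : Fin (d + 3 * d')) :
    Pemb d d' v i =
      if h : d + 2 ≤ i.1 ∧ i.1 < d + 2 + d' then v ⟨i.1 - (d + 2), by omega⟩ else 0 := by
  have h1 : Pemb d d' v i = (ContinuousLinearMap.pi (R := ℝ)
      (fun i : Fin (d + 3 * d') =>
        if h : d + 2 ≤ i.1 ∧ i.1 < d + 2 + d' then cproj (⟨i.1 - (d + 2), by omega⟩ : Fin d')
        else 0)) v i := rfl
  rw [h1, ContinuousLinearMap.pi_apply]
  split_ifs with h
  · rfl
  · rfl

/-- The affine map reading the `X`-block and the constant-one coordinate. -/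
def affCLM (d : ℕ) {d' : ℕ} (hd : 0 < d') (L : E d →L[ℝ] E d') (bb : E d') :
    E (d + 3 * d') →L[ℝ] E d' :=
  L.comp (Xproj d d') + (cproj ⟨d, by omega⟩).smulRight bb

lemma affCLM_apply (hd : 0 < d') (L : E d →L[ℝ] E d') (bb : E d') (z : E (d + 3 * d')) :
    affCLM d hd L bb z = L (Xproj d d' z) + z ⟨d, by omega⟩ • bb := rfl

/-! ### The token constructor -/

def stTok (d d' : ℕ) (c : ℝ) (y : E d) : E (d + 3 * d') :=
  toE fun i => if h : i.1 < d then y ⟨i.1, h⟩ else if i.1 = d then 1 else if i.1 = d + 1 then c else 0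

lemma stTok_apply (c : ℝ) (y : E d) (i : Fin (d + 3 * d')) :
    stTok d d' c y i
      = if h : i.1 < d then y ⟨i.1, h⟩ else if i.1 = d then 1 else if i.1 = d + 1 then c else 0 := rfl

lemma Xproj_stTok (c : ℝ) (y : E d) : Xproj d d' (stTok d d' c y) = y := by
  ext j
  rw [Xproj_apply, stTok_apply]
  exact dif_pos j.2

lemma Xproj_Pemb (v : E d') : Xproj d d' (Pemb d d' v) = 0 := by
  ext j
  rw [Xproj_apply, Pemb_apply]
  have hj : j.1 < d := j.2
  rw [dif_neg (show ¬(d + 2 ≤ j.1 ∧ j.1 < d + 2 + d') by omega)]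
  rfl

lemma Pproj_stTok (c : ℝ) (y : E d) : Pproj d d' (stTok d d' c y) = 0 := by
  ext h
  rw [Pproj_apply, stTok_apply]
  rw [dif_neg (show ¬(d + 2 + h.1 < d) by omega), if_neg (show ¬(d + 2 + h.1 = d) by omega),
    if_neg (show ¬(d + 2 + h.1 = d + 1) by omega)]
  rfl

lemma Pproj_Pemb (v : E d') : Pproj d d' (Pemb d d' v) = v := by
  ext h
  rw [Pproj_apply, Pemb_apply]
  have hh : h.1 < d' := h.2
  rw [dif_pos (show d + 2 ≤ d + 2 + h.1 ∧ d + 2 + h.1 < d + 2 + d' by omega)]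
  refine congrArg (fun i => v i) ?_
  apply Fin.ext
  show d + 2 + h.1 - (d + 2) = h.1
  omega

lemma stTok_one (hd : 0 < d') (c : ℝ) (y : E d) : stTok d d' c y ⟨d, by omega⟩ = 1 := by
  rw [stTok_apply, dif_neg (show ¬(d < d) by omega), if_pos rfl]

lemma Pemb_one (hd : 0 < d') (v : E d') : Pemb d d' v ⟨d, by omega⟩ = 0 := by
  rw [Pemb_apply, dif_neg (show ¬(d + 2 ≤ d ∧ d < d + 2 + d') by omega)]

lemma stTok_code (hd : 0 < d') (c : ℝ) (y : E d) : stTok d d' c y ⟨d + 1, by omega⟩ = c := by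
  rw [stTok_apply, dif_neg (show ¬(d + 1 < d) by omega), if_neg (show ¬(d + 1 = d) by omega),
    if_pos rfl]

lemma Pemb_code (hd : 0 < d') (v : E d') : Pemb d d' v ⟨d + 1, by omega⟩ = 0 := by
  rw [Pemb_apply, dif_neg (show ¬(d + 2 ≤ d + 1 ∧ d + 1 < d + 2 + d') by omega)]

lemma affCLM_stTok (hd : 0 < d') (L : E d →L[ℝ] E d') (bb : E d') (c : ℝ) (y : E d) :
    affCLM d hd L bb (stTok d d' c y) = L y + bb := by
  rw [affCLM_apply, Xproj_stTok, stTok_one hd, one_smul]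

lemma affCLM_Pemb (hd : 0 < d') (L : E d →L[ℝ] E d') (bb : E d') (v : E d') :
    affCLM d hd L bb (Pemb d d' v) = 0 := by
  rw [affCLM_apply, Xproj_Pemb, Pemb_one hd, map_zero, zero_smul, add_zero]

lemma continuous_stTok : Continuous fun p : ℝ × E d => stTok d d' p.1 p.2 := by
  refine (EuclideanSpace.equiv (Fin (d + 3 * d')) ℝ).symm.continuous.comp ?_
  refine continuous_pi fun i => ?_
  by_cases h1 : i.1 < d
  · simp only [dif_pos h1]
    exact (continuous_apply _).comp
      ((EuclideanSpace.equiv (Fin d) ℝ).continuous.comp continuous_snd)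
  · by_cases h2 : i.1 = d
    · simp only [dif_neg h1, if_pos h2]; exact continuous_const
    · by_cases h3 : i.1 = d + 1
      · simp only [dif_neg h1, if_neg h2, if_pos h3]; exact continuous_fst
      · simp only [dif_neg h1, if_neg h2, if_neg h3]; exact continuous_const

/-! ### Generic attention lemmas -/

lemma attention_eq {m dh k H : ℕ} (θ : AttentionParams m dh k H) (ν : Measure (E m)) (z : E m) :
    attention θ ν z = z + ∑ h : Fin H, θ.W h
      ((∫ w, Real.exp (⟪θ.Q h z, θ.K h w⟫ / Real.sqrt k) ∂ν)⁻¹ •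
        ∫ y, Real.exp (⟪θ.Q h z, θ.K h y⟫ / Real.sqrt k) • θ.V h y ∂ν) := by
  unfold attention
  simp only [div_eq_inv_mul, mul_smul, integral_smul]

lemma measurable_attention {m dh k H : ℕ} (θ : AttentionParams m dh k H)
    (ν : Measure (E m)) [SFinite ν] : Measurable (attention θ ν) := by
  have hD : ∀ h : Fin H,
      Measurable fun z : E m => ∫ w, Real.exp (⟪θ.Q h z, θ.K h w⟫ / Real.sqrt k) ∂ν := by
    intro h
    have hc : Continuous fun p : E m × E m => Real.exp (⟪θ.Q h p.1, θ.K h p.2⟫ / Real.sqrt k) :=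
      Real.continuous_exp.comp
        ((((θ.Q h).continuous.comp continuous_fst).inner
          ((θ.K h).continuous.comp continuous_snd)).div_const _)
    exact hc.stronglyMeasurable.integral_prod_right'.measurable
  have hI : ∀ h : Fin H,
      Measurable fun z : E m =>
        ∫ y, Real.exp (⟪θ.Q h z, θ.K h y⟫ / Real.sqrt k) • θ.V h y ∂ν := by
    intro h
    have hc : Continuous fun p : E m × E m =>
        Real.exp (⟪θ.Q h p.1, θ.K h p.2⟫ / Real.sqrt k) • θ.V h p.2 :=
      (Real.continuous_exp.comp
        ((((θ.Q h).continuous.comp continuous_fst).inner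
          ((θ.K h).continuous.comp continuous_snd)).div_const _)).smul
        ((θ.V h).continuous.comp continuous_snd)
    exact hc.stronglyMeasurable.integral_prod_right'.measurable
  have heq : attention θ ν = fun z => z + ∑ h : Fin H, θ.W h
      ((∫ w, Real.exp (⟪θ.Q h z, θ.K h w⟫ / Real.sqrt k) ∂ν)⁻¹ •
        ∫ y, Real.exp (⟪θ.Q h z, θ.K h y⟫ / Real.sqrt k) • θ.V h y ∂ν) :=
    funext fun z => attention_eq θ ν z
  rw [heq]
  refine measurable_id.add ?_
  refine Finset.measurable_sum _ fun h _ => ?_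
  exact (θ.W h).continuous.measurable.comp
    ((continuous_smul : Continuous fun p : ℝ × E dh => p.1 • p.2).measurable.comp
      (((hD h).inv).prodMk (hI h)))

/-- Attention for parameters with zero `W` is the identity. -/
lemma attention_zeroW {m dh k H : ℕ} (Q K : Fin H → (E m →L[ℝ] E k))
    (V : Fin H → (E m →L[ℝ] E dh)) (ν : Measure (E m)) (z : E m) :
    attention ⟨fun _ => 0, Q, K, V⟩ ν z = z := by
  simp [attention]

/-- Conjugated attention parameters. -/
def conjParams {m₁ m₂ dh k H : ℕ} (θ : AttentionParams m₂ dh k H)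
    (aff : E m₁ →L[ℝ] E m₂) (Pe : E m₂ →L[ℝ] E m₁) : AttentionParams m₁ dh k H :=
  ⟨fun h => Pe.comp (θ.W h), fun h => (θ.Q h).comp aff,
   fun h => (θ.K h).comp aff, fun h => (θ.V h).comp aff⟩

@[simp] lemma conjParams_W {m₁ m₂ dh k H : ℕ} (θ : AttentionParams m₂ dh k H)
    (aff : E m₁ →L[ℝ] E m₂) (Pe : E m₂ →L[ℝ] E m₁) (h : Fin H) :
    (conjParams θ aff Pe).W h = Pe.comp (θ.W h) := rfl
@[simp] lemma conjParams_Q {m₁ m₂ dh k H : ℕ} (θ : AttentionParams m₂ dh k H)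
    (aff : E m₁ →L[ℝ] E m₂) (Pe : E m₂ →L[ℝ] E m₁) (h : Fin H) :
    (conjParams θ aff Pe).Q h = (θ.Q h).comp aff := rfl
@[simp] lemma conjParams_K {m₁ m₂ dh k H : ℕ} (θ : AttentionParams m₂ dh k H)
    (aff : E m₁ →L[ℝ] E m₂) (Pe : E m₂ →L[ℝ] E m₁) (h : Fin H) :
    (conjParams θ aff Pe).K h = (θ.K h).comp aff := rfl
@[simp] lemma conjParams_V {m₁ m₂ dh k H : ℕ} (θ : AttentionParams m₂ dh k H)
    (aff : E m₁ →L[ℝ] E m₂) (Pe : E m₂ →L[ℝ] E m₁) (h : Fin H) :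
    (conjParams θ aff Pe).V h = (θ.V h).comp aff := rfl

/-- The key conjugation identity for attention under token maps. -/
lemma attention_conj {α : Type} [MeasurableSpace α] (μ : Measure α)
    {m₁ m₂ dh k H : ℕ} (θ : AttentionParams m₂ dh k H)
    (aff : E m₁ →L[ℝ] E m₂) (Pe : E m₂ →L[ℝ] E m₁)
    {s : α → E m₁} (hs : AEMeasurable s μ) {r : α → E m₂} (hr : AEMeasurable r μ)
    (hsr : ∀ y, aff (s y) = r y) (x₁ : E m₁) :
    attention (conjParams θ aff Pe) (μ.map s) x₁
      = x₁ + Pe (attention θ (μ.map r) (aff x₁) - aff x₁) := by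
  have key : ∀ h : Fin H,
      (∫ y, (Real.exp (⟪θ.Q h (aff x₁), θ.K h (aff y)⟫ / Real.sqrt k) /
          ∫ z, Real.exp (⟪θ.Q h (aff x₁), θ.K h (aff z)⟫ / Real.sqrt k) ∂(μ.map s)) •
          θ.V h (aff y) ∂(μ.map s))
      = ∫ y, (Real.exp (⟪θ.Q h (aff x₁), θ.K h y⟫ / Real.sqrt k) /
          ∫ z, Real.exp (⟪θ.Q h (aff x₁), θ.K h z⟫ / Real.sqrt k) ∂(μ.map r)) •
          θ.V h y ∂(μ.map r) := by
    intro h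
    have hc1 : Continuous fun z : E m₂ =>
        Real.exp (⟪θ.Q h (aff x₁), θ.K h z⟫ / Real.sqrt k) :=
      Real.continuous_exp.comp ((continuous_const.inner (θ.K h).continuous).div_const _)
    have hm1 : AEStronglyMeasurable
        (fun z : E m₁ => Real.exp (⟪θ.Q h (aff x₁), θ.K h (aff z)⟫ / Real.sqrt k))
        (μ.map s) := (hc1.comp aff.continuous).aestronglyMeasurable
    have hden : (∫ z, Real.exp (⟪θ.Q h (aff x₁), θ.K h (aff z)⟫ / Real.sqrt k) ∂(μ.map s))
        = ∫ z, Real.exp (⟪θ.Q h (aff x₁), θ.K h z⟫ / Real.sqrt k) ∂(μ.map r) := by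
      rw [integral_map hs hm1, integral_map hr hc1.aestronglyMeasurable]
      simp only [hsr]
    rw [hden]
    set D := ∫ z, Real.exp (⟪θ.Q h (aff x₁), θ.K h z⟫ / Real.sqrt k) ∂(μ.map r) with hD
    have hc2 : Continuous fun y : E m₂ =>
        (Real.exp (⟪θ.Q h (aff x₁), θ.K h y⟫ / Real.sqrt k) / D) • θ.V h y :=
      (hc1.div_const D).smul (θ.V h).continuous
    have hm2 : AEStronglyMeasurable
        (fun y : E m₁ => (Real.exp (⟪θ.Q h (aff x₁), θ.K h (aff y)⟫ / Real.sqrt k) / D) •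
          θ.V h (aff y)) (μ.map s) := (hc2.comp aff.continuous).aestronglyMeasurable
    rw [integral_map hs hm2, integral_map hr hc2.aestronglyMeasurable]
    simp only [hsr]
  have hatt : attention θ (μ.map r) (aff x₁) - aff x₁
      = ∑ h : Fin H, θ.W h (∫ y, (Real.exp (⟪θ.Q h (aff x₁), θ.K h y⟫ / Real.sqrt k) /
          ∫ z, Real.exp (⟪θ.Q h (aff x₁), θ.K h z⟫ / Real.sqrt k) ∂(μ.map r)) •
          θ.V h y ∂(μ.map r)) := by
    unfold attention
    rw [add_sub_cancel_left]
  rw [hatt, map_sum]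
  unfold attention
  simp only [conjParams_W, conjParams_Q, conjParams_K, conjParams_V,
    ContinuousLinearMap.comp_apply]
  congr 1
  exact Finset.sum_congr rfl fun h _ => congrArg _ (congrArg _ (key h))

/-! ### Chains of layers -/

inductive Chain {d m : ℕ} (μ : Measure (E d)) :
    List (ICMap m m) → (E d → E m) → (E d → E m) → Prop
  | nil (s : E d → E m) : Chain μ [] s s
  | cons {l : ICMap m m} {ls : List (ICMap m m)} {s0 s' s1 : E d → E m}
      (h0 : Measurable s0) (hl : Measurable (l (μ.map s0)))
      (hstep : ∀ y, l (μ.map s0) (s0 y) = s' y) (htail : Chain μ ls s' s1) :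
      Chain μ (l :: ls) s0 s1

lemma Chain.compList_eq {d m : ℕ} {μ : Measure (E d)} :
    ∀ {L : List (ICMap m m)} {s0 s1 : E d → E m}, Chain μ L s0 s1 →
      ∀ x, compList L (μ.map s0) (s0 x) = s1 x := by
  intro L
  induction L with
  | nil =>
    intro s0 s1 h x
    cases h
    rfl
  | cons l ls ih =>
    intro s0 s1 h x
    cases h with
    | cons h0 hl hstep htail =>
      rename_i s'
      show compList ls ((μ.map s0).map (l (μ.map s0))) (l (μ.map s0) (s0 x)) = s1 x
      rw [Measure.map_map hl h0]
      have hcomp : (l (μ.map s0)) ∘ s0 = s' := funext hstep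
      rw [hcomp, hstep x]
      exact ih htail x

lemma Chain.append {d m : ℕ} {μ : Measure (E d)} :
    ∀ {L₁ L₂ : List (ICMap m m)} {s0 s1 s2 : E d → E m},
      Chain μ L₁ s0 s1 → Chain μ L₂ s1 s2 → Chain μ (L₁ ++ L₂) s0 s2 := by
  intro L₁ L₂ s0 s1 s2 h1
  induction h1 with
  | nil s => intro h2; exact h2
  | cons h0 hl hstep htail ih => intro h2; exact Chain.cons h0 hl hstep (ih h2)

/-! ### Codes, decoding and nested sums -/

def codeVal (d' : ℕ) (e : (ℝ × E d') ≃ᵐ ℝ) (vs : List (E d')) : ℝ :=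
  vs.foldl (fun c a => e (c, a)) 0

def decodeList (d' : ℕ) (e : (ℝ × E d') ≃ᵐ ℝ) : ℕ → ℝ → List (E d')
  | 0, _ => []
  | j + 1, c => (e.symm c).2 :: decodeList d' e j (e.symm c).1

lemma decode_codeVal (e : (ℝ × E d') ≃ᵐ ℝ) :
    ∀ vs : List (E d'), decodeList d' e vs.length (codeVal d' e vs) = vs.reverse := by
  intro vs
  induction vs using List.reverseRecOn with
  | nil => rfl
  | append_singleton l a ih =>
    have hcode : codeVal d' e (l ++ [a]) = e (codeVal d' e l, a) := by
      simp [codeVal, List.foldl_append]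
    have hlen : (l ++ [a]).length = l.length + 1 := by simp
    rw [hcode, hlen]
    show (e.symm (e (codeVal d' e l, a))).2 ::
        decodeList d' e l.length (e.symm (e (codeVal d' e l, a))).1 = _
    rw [e.symm_apply_apply]
    simp [ih]

def nestList (d' : ℕ) (Φ : E d' × E d' → E d') (l : List (E d')) : E d' :=
  l.foldl (fun r a => Φ (a, r)) (toE fun _ => 1)

lemma nestList_ofFn (Φ : E d' × E d' → E d') :
    ∀ (T : ℕ) (w : Fin T → E d'), nestList d' Φ (List.ofFn w) = nestPhi Φ T w := by
  intro T
  induction T with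
  | zero => intro w; rfl
  | succ T ih =>
    intro w
    rw [List.ofFn_succ']
    show List.foldl (fun r a => Φ (a, r)) (toE fun _ => 1)
        ((List.ofFn fun i => w i.castSucc).concat (w (Fin.last T))) = _
    rw [List.concat_eq_append, List.foldl_append]
    show Φ (w (Fin.last T), nestList d' Φ (List.ofFn fun i => w i.castSucc)) = _
    rw [ih]
    rfl

def sumNest (d' : ℕ) (Φ : E d' × E d' → E d') (T : ℕ) : ℕ → List (E d') → E d'
  | 0, _ => 0
  | n + 1, vs => nestList d' Φ (vs.take T) + sumNest d' Φ T n (vs.drop T)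

lemma sumNest_flatMap (Φ : E d' × E d' → E d') (T : ℕ) :
    ∀ (N : ℕ) (w : Fin N → Fin T → E d'),
      sumNest d' Φ T N ((List.finRange N).flatMap fun n => (List.finRange T).map fun t => w n t)
        = ∑ n : Fin N, nestPhi Φ T (w n) := by
  intro N
  induction N with
  | zero => intro w; simp [sumNest]
  | succ N ih =>
    intro w
    rw [List.finRange_succ, List.flatMap_cons, List.flatMap_map]
    have hlen : ((List.finRange T).map fun t => w 0 t).length = T := by simp
    show nestList d' Φ (List.take T _) + sumNest d' Φ T N (List.drop T _) = _
    rw [List.take_left' hlen, List.drop_left' hlen, Fin.sum_univ_succ,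
      ← List.ofFn_eq_map, nestList_ofFn]
    congr 1
    simpa [Function.comp_def] using ih fun n t => w n.succ t


/-! ### Token-level maps used in the construction -/

def FmF (d : ℕ) {d' : ℕ} (hd : 0 < d') (e : (ℝ × E d') ≃ᵐ ℝ)
    (L : E d →L[ℝ] E d') (bb : E d') (z : E (d + 3 * d')) : E (d + 3 * d') :=
  stTok d d' (e (z ⟨d + 1, by omega⟩, affCLM d hd L bb z + Pproj d d' z)) (Xproj d d' z)

def stF (d' : ℕ) {d : ℕ} (e : (ℝ × E d') ≃ᵐ ℝ) (gs : List (E d → E d')) (y : E d) :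
    E (d + 3 * d') :=
  stTok d d' (codeVal d' e (gs.map fun g => g y)) y

def aFF {d d' dh kk H : ℕ} (θ : AttentionParams d' dh kk H) (L : E d →L[ℝ] E d')
    (bb : E d') (μ : Measure (E d)) (y : E d) : E d' :=
  attention θ (μ.map fun z => L z + bb) (L y + bb)

lemma codeVal_append {d' : ℕ} (e : (ℝ × E d') ≃ᵐ ℝ) (vs : List (E d')) (a : E d') :
    codeVal d' e (vs ++ [a]) = e (codeVal d' e vs, a) := by
  simp [codeVal, List.foldl_append]

lemma stF_code {d d' : ℕ} (hd : 0 < d') (e : (ℝ × E d') ≃ᵐ ℝ)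
    (gs : List (E d → E d')) (y : E d) :
    stF d' e gs y ⟨d + 1, by omega⟩ = codeVal d' e (gs.map fun g => g y) :=
  stTok_code hd _ _

lemma measurable_codeVal {d d' : ℕ} (e : (ℝ × E d') ≃ᵐ ℝ) :
    ∀ (gs : List (E d → E d')) (c0 : E d → ℝ), Measurable c0 → (∀ g ∈ gs, Measurable g) →
      Measurable fun y => (gs.map fun g => g y).foldl (fun c a => e (c, a)) (c0 y) := by
  intro gs
  induction gs with
  | nil => intro c0 h0 _; simpa using h0
  | cons g gs ih =>
    intro c0 h0 hgs
    have hrw : (fun y => (((g :: gs).map fun g => g y).foldl (fun c a => e (c, a)) (c0 y)))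
        = fun y => ((gs.map fun g => g y).foldl (fun c a => e (c, a)) (e (c0 y, g y))) := rfl
    rw [hrw]
    exact ih _ (e.measurable.comp (h0.prodMk (hgs g (List.mem_cons_self))))
      fun g' hg' => hgs g' (List.mem_cons_of_mem _ hg')

lemma measurable_stF {d d' : ℕ} (e : (ℝ × E d') ≃ᵐ ℝ) (gs : List (E d → E d'))
    (hgs : ∀ g ∈ gs, Measurable g) : Measurable (stF d' e gs) := by
  have hcode : Measurable fun y : E d => codeVal d' e (gs.map fun g => g y) :=
    measurable_codeVal e gs (fun _ => 0) measurable_const hgs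
  exact continuous_stTok.measurable.comp (hcode.prodMk measurable_id)

lemma measurable_FmF {d d' : ℕ} (hd : 0 < d') (e : (ℝ × E d') ≃ᵐ ℝ)
    (L : E d →L[ℝ] E d') (bb : E d') : Measurable (FmF d hd e L bb) := by
  have h1 : Measurable fun z : E (d + 3 * d') =>
      e (z ⟨d + 1, by omega⟩, affCLM d hd L bb z + Pproj d d' z) :=
    e.measurable.comp
      ((cproj (⟨d + 1, by omega⟩ : Fin (d + 3 * d'))).continuous.measurable.prodMk
        ((affCLM d hd L bb).continuous.add (Pproj d d').continuous).measurable)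
  exact continuous_stTok.measurable.comp (h1.prodMk (Xproj d d').continuous.measurable)

lemma measurable_aFF {d d' dh kk H : ℕ} (θ : AttentionParams d' dh kk H)
    (L : E d →L[ℝ] E d') (bb : E d') (μ : Measure (E d)) [IsProbabilityMeasure μ] :
    Measurable (aFF θ L bb μ) := by
  have hc : Continuous fun z : E d => L z + bb := L.continuous.add continuous_const
  haveI : IsProbabilityMeasure (μ.map fun z => L z + bb) :=
    Measure.isProbabilityMeasure_map hc.measurable.aemeasurable
  exact (measurable_attention θ _).comp hc.measurable

lemma Fmid_eq {d d' : ℕ} (hd : 0 < d') (e : (ℝ × E d') ≃ᵐ ℝ)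
    (L : E d →L[ℝ] E d') (bb : E d') (c : ℝ) (y : E d) (v : E d') :
    stTok d d' (e ((stTok d d' c y + Pemb d d' v) ⟨d + 1, by omega⟩,
        affCLM d hd L bb (stTok d d' c y + Pemb d d' v)
          + Pproj d d' (stTok d d' c y + Pemb d d' v)))
      (Xproj d d' (stTok d d' c y + Pemb d d' v))
    = stTok d d' (e (c, (L y + bb) + v)) y := by
  have h1 : (stTok d d' c y + Pemb d d' v) ⟨d + 1, by omega⟩ = c := by
    show stTok d d' c y ⟨d + 1, by omega⟩ + Pemb d d' v ⟨d + 1, by omega⟩ = c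
    rw [stTok_code hd, Pemb_code hd, add_zero]
  have h2 : affCLM d hd L bb (stTok d d' c y + Pemb d d' v) = L y + bb := by
    rw [map_add, affCLM_stTok hd, affCLM_Pemb hd, add_zero]
  have h3 : Pproj d d' (stTok d d' c y + Pemb d d' v) = v := by
    rw [map_add, Pproj_stTok, Pproj_Pemb, zero_add]
  have h4 : Xproj d d' (stTok d d' c y + Pemb d d' v) = y := by
    rw [map_add, Xproj_stTok, Xproj_Pemb, add_zero]
  rw [h1, h2, h3, h4]

/-- The single-layer step: one conjugated masked attention followed by the
code-updating tokenwise layer writes the attention value into the code. -/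
lemma step_main {d d' : ℕ} (hd : 0 < d') (e : (ℝ × E d') ≃ᵐ ℝ) {dh kk H : ℕ}
    (θ : AttentionParams d' dh kk H) (L : E d →L[ℝ] E d') (bb : E d')
    (μ : Measure (E d)) (gs : List (E d → E d')) (hgs : ∀ g ∈ gs, Measurable g)
    (y : E d) :
    FmF d hd e L bb
        (attention (conjParams θ (affCLM d hd L bb) (Pemb d d'))
          (μ.map (stF d' e gs)) (stF d' e gs y))
      = stF d' e (gs ++ [aFF θ L bb μ]) y := by
  have hs0 : Measurable (stF d' e gs) := measurable_stF e gs hgs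
  have hr : ∀ w, affCLM d hd L bb (stF d' e gs w) = L w + bb := fun w =>
    affCLM_stTok hd L bb _ w
  have hrm : AEMeasurable (fun w : E d => L w + bb) μ :=
    (L.continuous.add continuous_const).measurable.aemeasurable
  have hac := attention_conj μ θ (affCLM d hd L bb) (Pemb d d') hs0.aemeasurable hrm
    hr (stF d' e gs y)
  rw [hr y] at hac
  rw [hac]
  show stTok d d'
      (e ((stTok d d' (codeVal d' e (gs.map fun g => g y)) y + Pemb d d' _) ⟨d + 1, by omega⟩,
        affCLM d hd L bb (stTok d d' (codeVal d' e (gs.map fun g => g y)) y + Pemb d d' _)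
          + Pproj d d' (stTok d d' (codeVal d' e (gs.map fun g => g y)) y + Pemb d d' _)))
      (Xproj d d' (stTok d d' (codeVal d' e (gs.map fun g => g y)) y + Pemb d d' _)) = _
  rw [Fmid_eq hd e L bb]
  have harr : (L y + bb) + (attention θ (μ.map fun w => L w + bb) (L y + bb) - (L y + bb))
      = attention θ (μ.map fun w => L w + bb) (L y + bb) := by abel
  rw [harr]
  show _ = stTok d d' (codeVal d' e ((gs ++ [aFF θ L bb μ]).map fun g => g y)) y
  rw [List.map_append]
  show _ = stTok d d' (codeVal d' e (((gs.map fun g => g y)) ++ [aFF θ L bb μ y])) y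
  rw [codeVal_append]
  rfl

/-- Chain for one row (fixed `n`, a list of `t`-indices). -/
lemma chain_row {d d' : ℕ} (hd : 0 < d') (e : (ℝ × E d') ≃ᵐ ℝ) {dh kk H T N : ℕ}
    (θ : Fin T → Fin N → AttentionParams d' dh kk H)
    (A : Fin T → Fin N → (E d →L[ℝ] E d')) (b : Fin T → Fin N → E d')
    (μ : Measure (E d)) [IsProbabilityMeasure μ] (n : Fin N) :
    ∀ (ts : List (Fin T)) (gs : List (E d → E d')), (∀ g ∈ gs, Measurable g) →
      Chain μ (ts.map fun t => ictxComp (ctxFree (FmF d hd e (A t n) (b t n)))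
          (attention (conjParams (θ t n) (affCLM d hd (A t n) (b t n)) (Pemb d d'))))
        (stF d' e gs)
        (stF d' e (gs ++ ts.map fun t => aFF (θ t n) (A t n) (b t n) μ)) := by
  intro ts
  induction ts with
  | nil =>
    intro gs hgs
    simp only [List.map_nil, List.append_nil]
    exact Chain.nil _
  | cons t ts ih =>
    intro gs hgs
    have hs0 : Measurable (stF d' e gs) := measurable_stF e gs hgs
    haveI : IsProbabilityMeasure (μ.map (stF d' e gs)) :=
      Measure.isProbabilityMeasure_map hs0.aemeasurable
    have hgs' : ∀ g ∈ gs ++ [aFF (θ t n) (A t n) (b t n) μ], Measurable g := by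
      intro g hg
      rcases List.mem_append.1 hg with hg | hg
      · exact hgs g hg
      · have : g = aFF (θ t n) (A t n) (b t n) μ := by simpa using hg
        rw [this]
        exact measurable_aFF _ _ _ _
    have htail := ih (gs ++ [aFF (θ t n) (A t n) (b t n) μ]) hgs'
    have hassoc : (gs ++ [aFF (θ t n) (A t n) (b t n) μ])
        ++ ts.map (fun t => aFF (θ t n) (A t n) (b t n) μ)
        = gs ++ (t :: ts).map (fun t => aFF (θ t n) (A t n) (b t n) μ) := by
      simp [List.append_assoc]
    rw [hassoc] at htail
    refine Chain.cons hs0 ?_ ?_ htail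
    · show Measurable fun z =>
        FmF d hd e (A t n) (b t n)
          (attention (conjParams (θ t n) (affCLM d hd (A t n) (b t n)) (Pemb d d'))
            (μ.map (stF d' e gs)) z)
      exact (measurable_FmF hd e _ _).comp (measurable_attention _ _)
    · intro y
      exact step_main hd e (θ t n) (A t n) (b t n) μ gs hgs y

/-- Chain for a list of rows. -/
lemma chain_blocks {d d' : ℕ} (hd : 0 < d') (e : (ℝ × E d') ≃ᵐ ℝ) {dh kk H T N : ℕ}
    (θ : Fin T → Fin N → AttentionParams d' dh kk H)
    (A : Fin T → Fin N → (E d →L[ℝ] E d')) (b : Fin T → Fin N → E d')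
    (μ : Measure (E d)) [IsProbabilityMeasure μ] :
    ∀ (ns : List (Fin N)) (gs : List (E d → E d')), (∀ g ∈ gs, Measurable g) →
      Chain μ (ns.flatMap fun n => (List.finRange T).map fun t =>
          ictxComp (ctxFree (FmF d hd e (A t n) (b t n)))
            (attention (conjParams (θ t n) (affCLM d hd (A t n) (b t n)) (Pemb d d'))))
        (stF d' e gs)
        (stF d' e (gs ++ ns.flatMap fun n => (List.finRange T).map fun t =>
          aFF (θ t n) (A t n) (b t n) μ)) := by
  intro ns
  induction ns with
  | nil =>
    intro gs hgs
    simp only [List.flatMap_nil, List.append_nil]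
    exact Chain.nil _
  | cons n ns ih =>
    intro gs hgs
    simp only [List.flatMap_cons]
    have hgs' : ∀ g ∈ gs ++ (List.finRange T).map fun t => aFF (θ t n) (A t n) (b t n) μ,
        Measurable g := by
      intro g hg
      rcases List.mem_append.1 hg with hg | hg
      · exact hgs g hg
      · rcases List.mem_map.1 hg with ⟨t, _, rfl⟩
        exact measurable_aFF _ _ _ _
    have h2 := ih (gs ++ (List.finRange T).map fun t => aFF (θ t n) (A t n) (b t n) μ) hgs'
    rw [List.append_assoc] at h2
    exact (chain_row hd e θ A b μ n (List.finRange T) gs hgs).append h2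

end ER

end ERAux


/-- **Exact representation of `G_Φ` by a deep transformer (Lemma 10).** Given any map
`Φ : ℝ^{2d'} → ℝ^{d'}`, affine maps `F_{ξ̃ₜₙ}(x) = Aₜₙ x + bₜₙ` and attentions `Γ_{θ̃ₜₙ}`
with `d_in = d'`, `d_head = k = 1`, `H = d'`, whose `h`-th head has `W̃ʰ = eₕ` and
`Ṽʰ, Q̃ʰ, K̃ʰ` supported on the `h`-th coordinate, there are context-free tokenwise layers
`F_{ξ₀}, (F_{ξₜₙ}), F_*` and attentions `θ₀, (θₜₙ), θ_*` with the stated dimensions such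
that `G_Φ = F_{ξ_*} ⋄ Γ_{θ_*} ⋄ (⋄ₙ ⋄ₜ F_{ξₜₙ} ⋄ Γ_{θₜₙ}) ⋄ F_{ξ₀} ⋄ Γ_{θ₀}` exactly. -/
theorem exact_representation {d d' : ℕ} (Ω : Set (E d)) (hΩ : IsCompact Ω)
    (Φ : E d' × E d' → E d')
    (T N : ℕ) (θ : Fin T → Fin N → AttentionParams d' 1 1 d')
    (A : Fin T → Fin N → (E d →L[ℝ] E d')) (b : Fin T → Fin N → E d')
    (hW : ∀ t n (h : Fin d') (u : E 1),
      (θ t n).W h u = u 0 • EuclideanSpace.single h (1:ℝ))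
    (v q k : Fin T → Fin N → Fin d' → ℝ)
    (hV : ∀ t n (h : Fin d') (y : E d'),
      (θ t n).V h y = toE fun _ : Fin 1 => v t n h * y h)
    (hQ : ∀ t n (h : Fin d') (y : E d'),
      (θ t n).Q h y = toE fun _ : Fin 1 => q t n h * y h)
    (hK : ∀ t n (h : Fin d') (y : E d'),
      (θ t n).K h y = toE fun _ : Fin 1 => k t n h * y h) :
    ∃ (θ₀ : AttentionParams d 1 1 1) (F₀ : E d → E (d + 3 * d'))
      (θmid : Fin T → Fin N → AttentionParams (d + 3 * d') 1 1 d')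
      (Fmid : Fin T → Fin N → (E (d + 3 * d') → E (d + 3 * d')))
      (θs : AttentionParams (d + 3 * d') 1 1 1) (Fs : E (d + 3 * d') → E d'),
      ∀ (μ : ProbabilityMeasure Ω) (x : Ω),
        (ictxComp (ctxFree Fs)
            (ictxComp (attention θs)
              (ictxComp
                (compList ((List.finRange N).flatMap fun n =>
                  (List.finRange T).map fun t =>
                    ictxComp (ctxFree (Fmid t n)) (attention (θmid t n))))
                (ictxComp (ctxFree F₀) (attention θ₀)))))
          (μ.toMeasure.map Subtype.val) (x : E d)
        = ∑ n : Fin N, nestPhi Φ T fun t : Fin T =>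
            attention (θ t n)
              ((μ.toMeasure.map Subtype.val).map fun y => A t n y + b t n)
              (A t n (x : E d) + b t n) := by
  classical
  rcases Nat.eq_zero_or_pos d' with hd0 | hd'
  · subst hd0
    refine ⟨⟨fun _ => 0, fun _ => 0, fun _ => 0, fun _ => 0⟩, fun _ => 0,
      fun _ _ => ⟨fun _ => 0, fun _ => 0, fun _ => 0, fun _ => 0⟩, fun _ _ => id,
      ⟨fun _ => 0, fun _ => 0, fun _ => 0, fun _ => 0⟩, fun _ => 0, ?_⟩
    intro μ x
    exact PiLp.ext fun i => i.elim0
  · set e := ER.enc d' with he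
    refine ⟨⟨fun _ => 0, fun _ => 0, fun _ => 0, fun _ => 0⟩, ER.stF d' e [],
      (fun t n => ER.conjParams (θ t n) (ER.affCLM d hd' (A t n) (b t n)) (ER.Pemb d d')),
      (fun t n => ER.FmF d hd' e (A t n) (b t n)),
      ⟨fun _ => 0, fun _ => 0, fun _ => 0, fun _ => 0⟩,
      (fun z => ER.sumNest d' Φ T N (ER.decodeList d' e (N * T) (z ⟨d + 1, by omega⟩)).reverse),
      ?_⟩
    intro μ x
    set μh := μ.toMeasure.map (Subtype.val : Ω → E d) with hμh
    haveI : IsProbabilityMeasure μh :=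
      Measure.isProbabilityMeasure_map measurable_subtype_coe.aemeasurable
    simp only [ictxComp, ctxFree, ER.attention_zeroW]
    have hchain := ER.chain_blocks hd' e θ A b μh (List.finRange N) []
      (by intro g hg; simp at hg)
    rw [List.nil_append] at hchain
    have hcomp := hchain.compList_eq (x : E d)
    have hF0 : (Measure.map (ictxComp (ctxFree (ER.stF d' e []))
        (attention (⟨fun _ => 0, fun _ => 0, fun _ => 0, fun _ => 0⟩ : AttentionParams d 1 1 1))
          μh) μh)
        = μh.map (ER.stF d' e []) := by
      congr 1
      funext y
      simp [ictxComp, ctxFree, ER.attention_zeroW]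
    rw [hF0, hcomp]
    rw [ER.stF_code hd']
    have hlen : ((((List.finRange N).flatMap fun n => (List.finRange T).map fun t =>
        ER.aFF (θ t n) (A t n) (b t n) μh).map fun g => g (x : E d))).length = N * T := by
      simp [List.length_flatMap, Function.comp_def, List.map_const']
    have hG : (((List.finRange N).flatMap fun n => (List.finRange T).map fun t =>
        ER.aFF (θ t n) (A t n) (b t n) μh).map fun g => g (x : E d))
        = (List.finRange N).flatMap fun n => (List.finRange T).map fun t =>
            ER.aFF (θ t n) (A t n) (b t n) μh (x : E d) := by
      simp [List.map_flatMap, List.map_map, Function.comp_def]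
    rw [← hlen, ER.decode_codeVal, List.reverse_reverse, hG, ER.sumNest_flatMap]
    rfl
end

section
/- Let Ω ⊂ ℝ^d be compact and let G(μ, x) = Σ_{n=1}^N (Γ_{θ̃_{1,n}} ⋄ F_{ξ̃_{1,n}})(μ, x) ⊙ ⋯ ⊙ (Γ_{θ̃_{T,n}} ⋄ F_{ξ̃_{T,n}})(μ, x) with F_{ξ̃_{t,n}} : ℝ^d → ℝ^{d'} affine and Γ_{θ̃_{t,n}} multi-head self-attention maps with d_in = d', d_head = k = 1, H = d'. Then for any ε > 0 there exist L ∈ ℕ and parameters (θ_ℓ, ξ_ℓ)_{ℓ=1}^L such that for all (μ, x) ∈ P(Ω) × Ω, |G(μ, x) − F_{ξ_L} ⋄ Γ_{θ_L} ⋄ ⋯ ⋄ F_{ξ_1} ⋄ Γ_{θ_1}(μ, x)| ≤ ε, with d_in(θ_ℓ) ≤ d + 3d', d_head(θ_ℓ) = k(θ_ℓ) = 1, and H(θ_ℓ) ≤ d'. -/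
open MeasureTheory Set Filter
open scoped ENNReal RealInnerProductSpace BigOperators Topology

noncomputable section
namespace DTA


lemma toE_apply {n : ℕ} (f : Fin n → ℝ) (i : Fin n) : toE f i = f i := rfl
lemma toE_eta {n : ℕ} (x : E n) : toE (fun i => x i) = x := rfl
def e1 (r : ℝ) : E 1 := toE fun _ => r
lemma e1_apply (r : ℝ) (i : Fin 1) : e1 r i = r := rfl
lemma e1_eta (v : E 1) : e1 (v 0) = v := by
  refine (EuclideanSpace.equiv (Fin 1) ℝ).injective ?_
  funext i; fin_cases i; rfl
lemma smul_e1 (r : ℝ) : r • e1 1 = e1 r := by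
  refine (EuclideanSpace.equiv (Fin 1) ℝ).injective ?_
  funext i; fin_cases i; simp [e1, toE]
lemma inner_E1 (a b : E 1) : ⟪a, b⟫ = a 0 * b 0 := by
  rw [PiLp.inner_apply, Fin.sum_univ_one]; simp [RCLike.inner_apply, conj_trivial, mul_comm]
lemma sum_coord {M k : ℕ} (f : Fin k → E M) (i : Fin M) :
    (∑ h, f h) i = ∑ h, f h i := map_sum (EuclideanSpace.proj (𝕜 := ℝ) i) f Finset.univ

variable (d d' : ℕ)
def idxX (j : Fin d) : Fin (d + 3 * d') := ⟨j, by have := j.2; omega⟩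
def idxP (h : Fin d') : Fin (d + 3 * d') := ⟨d + h, by have := h.2; omega⟩
def idxS (h : Fin d') : Fin (d + 3 * d') := ⟨d + d' + h, by have := h.2; omega⟩
def idxC (h : Fin d') : Fin (d + 3 * d') := ⟨d + 2 * d' + h, by have := h.2; omega⟩
def pack (x : E d) (p s c : Fin d' → ℝ) : E (d + 3 * d') :=
  toE fun i => if h1 : (i : ℕ) < d then x ⟨i, h1⟩
    else if h2 : (i : ℕ) < d + d' then p ⟨(i : ℕ) - d, by omega⟩
    else if h3 : (i : ℕ) < d + 2 * d' then s ⟨(i : ℕ) - (d + d'), by omega⟩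
    else c ⟨(i : ℕ) - (d + 2 * d'), by have := i.2; omega⟩
def ux (u : E (d + 3 * d')) : E d := toE fun j => u (idxX d d' j)
def uxL : E (d + 3 * d') →L[ℝ] E d :=
  ((EuclideanSpace.equiv (Fin d) ℝ).symm.toContinuousLinearMap).comp
    (((ContinuousLinearMap.pi fun j => ContinuousLinearMap.proj (R := ℝ) (φ := fun _ : Fin (d + 3 * d') => ℝ) (idxX d d' j))).comp
      ((EuclideanSpace.equiv (Fin (d + 3 * d')) ℝ).toContinuousLinearMap))
def toE1L : ℝ →L[ℝ] E 1 :=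
  ((EuclideanSpace.equiv (Fin 1) ℝ).symm.toContinuousLinearMap).comp
    (ContinuousLinearMap.pi fun _ : Fin 1 => ContinuousLinearMap.id ℝ ℝ)

variable {d d'}
lemma uxL_apply (u : E (d + 3 * d')) : uxL d d' u = ux d d' u := rfl
lemma toE1L_apply (r : ℝ) : toE1L r = e1 r := rfl
lemma pack_idxX (x : E d) (p s c : Fin d' → ℝ) (j : Fin d) :
    pack d d' x p s c (idxX d d' j) = x j := by
  have hj := j.2
  simp only [pack, toE_apply, idxX]
  rw [dif_pos hj]
lemma pack_idxP (x : E d) (p s c : Fin d' → ℝ) (h : Fin d') :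
    pack d d' x p s c (idxP d d' h) = p h := by
  have hh := h.2
  simp only [pack, toE_apply, idxP]
  rw [dif_neg (by omega), dif_pos (by omega)]
  exact congrArg p (Fin.ext (by simp))
lemma pack_idxS (x : E d) (p s c : Fin d' → ℝ) (h : Fin d') :
    pack d d' x p s c (idxS d d' h) = s h := by
  have hh := h.2
  simp only [pack, toE_apply, idxS]
  rw [dif_neg (by omega), dif_neg (by omega), dif_pos (by omega)]
  exact congrArg s (Fin.ext (by simp))
lemma pack_idxC (x : E d) (p s c : Fin d' → ℝ) (h : Fin d') :
    pack d d' x p s c (idxC d d' h) = c h := by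
  have hh := h.2
  simp only [pack, toE_apply, idxC]
  rw [dif_neg (by omega), dif_neg (by omega), dif_neg (by omega)]
  exact congrArg c (Fin.ext (by simp))
lemma idxX_ne_idxC (j : Fin d) (h : Fin d') : idxX d d' j ≠ idxC d d' h := by
  have := j.2; simp only [idxX, idxC, ne_eq, Fin.mk.injEq]; omega
lemma idxP_ne_idxC (i h : Fin d') : idxP d d' i ≠ idxC d d' h := by
  have := i.2; simp only [idxP, idxC, ne_eq, Fin.mk.injEq]; omega
lemma idxS_ne_idxC (i h : Fin d') : idxS d d' i ≠ idxC d d' h := by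
  have := i.2; simp only [idxS, idxC, ne_eq, Fin.mk.injEq]; omega
lemma idxC_eq_iff (i h : Fin d') : idxC d d' i = idxC d d' h ↔ i = h := by
  simp only [idxC, Fin.mk.injEq]; omega
lemma ux_pack (x : E d) (p s c : Fin d' → ℝ) : ux d d' (pack d d' x p s c) = x := by
  refine (EuclideanSpace.equiv (Fin d) ℝ).injective (funext fun j => ?_)
  exact pack_idxX x p s c j

/-! ### attention rewriting -/

lemma attention_zero {M : ℕ} (θ₀ : AttentionParams M 1 1 0) (ν : Measure (E M)) (x : E M) :
    attention θ₀ ν x = x := by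
  simp [attention]

lemma attention_map {D M H : ℕ} (θ₀ : AttentionParams M 1 1 H)
    (ν : Measure (E D)) (Φ : E D → E M) (hΦ : AEMeasurable Φ ν) (x : E D) :
    attention θ₀ (ν.map Φ) (Φ x) = Φ x + ∑ h : Fin H, θ₀.W h
      ((∫ z, Real.exp (⟪θ₀.Q h (Φ x), θ₀.K h (Φ z)⟫) ∂ν)⁻¹ •
        ∫ w, Real.exp (⟪θ₀.Q h (Φ x), θ₀.K h (Φ w)⟫) • θ₀.V h (Φ w) ∂ν) := by
  unfold attention
  congr 1
  refine Finset.sum_congr rfl fun h _ => ?_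
  congr 1
  have hsq : Real.sqrt ((1:ℕ) : ℝ) = 1 := by norm_num
  have hcQK : Continuous fun w : E M => Real.exp (⟪θ₀.Q h (Φ x), θ₀.K h w⟫ / Real.sqrt ((1:ℕ):ℝ)) := by
    apply Real.continuous_exp.comp
    exact (Continuous.inner continuous_const ((θ₀.K h).continuous)).div_const _
  have hden : (∫ z, Real.exp (⟪θ₀.Q h (Φ x), θ₀.K h z⟫ / Real.sqrt ((1:ℕ):ℝ)) ∂(ν.map Φ))
      = ∫ z, Real.exp (⟪θ₀.Q h (Φ x), θ₀.K h (Φ z)⟫) ∂ν := by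
    rw [integral_map hΦ hcQK.aestronglyMeasurable]
    simp [hsq]
  rw [hden]
  set D₀ : ℝ := ∫ z, Real.exp (⟪θ₀.Q h (Φ x), θ₀.K h (Φ z)⟫) ∂ν with hD₀
  have hcf : Continuous fun w : E M =>
      (Real.exp (⟪θ₀.Q h (Φ x), θ₀.K h w⟫ / Real.sqrt ((1:ℕ):ℝ)) / D₀) • θ₀.V h w :=
    (hcQK.div_const _).smul (θ₀.V h).continuous
  rw [integral_map hΦ hcf.aestronglyMeasurable]
  simp_rw [hsq, div_one, div_eq_mul_inv, mul_comm _ D₀⁻¹, mul_smul]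
  rw [integral_smul]

/-! ### semantic functions -/

variable {T N : ℕ}
variable (d d')
variable (θ : Fin T → Fin N → AttentionParams d' 1 1 d')
  (A : Fin T → Fin N → (E d →L[ℝ] E d')) (b : Fin T → Fin N → E d')

def aff (t : Fin T) (n : Fin N) (y : E d) : E d' := A t n y + b t n
def qf (t : Fin T) (n : Fin N) (h : Fin d') (y : E d) : ℝ := (θ t n).Q h (aff d d' A b t n y) 0
def kf (t : Fin T) (n : Fin N) (h : Fin d') (y : E d) : ℝ := (θ t n).K h (aff d d' A b t n y) 0
def Df (t : Fin T) (n : Fin N) (h : Fin d') (ν : Measure (E d)) (y : E d) : ℝ :=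
  ∫ z, Real.exp (qf d d' θ A b t n h y * kf d d' θ A b t n h z) ∂ν
def Jf (t : Fin T) (n : Fin N) (h : Fin d') (ν : Measure (E d)) (y : E d) : E 1 :=
  ∫ w, Real.exp (qf d d' θ A b t n h y * kf d d' θ A b t n h w) • (θ t n).V h (aff d d' A b t n w) ∂ν
def sfun (t : Fin T) (n : Fin N) (h : Fin d') (ν : Measure (E d)) (y : E d) : ℝ :=
  ((Df d d' θ A b t n h ν y)⁻¹ • Jf d d' θ A b t n h ν y) 0
def gam (t : Fin T) (n : Fin N) (ν : Measure (E d)) (y : E d) : E d' :=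
  aff d d' A b t n y + ∑ h : Fin d', (θ t n).W h
    ((Df d d' θ A b t n h ν y)⁻¹ • Jf d d' θ A b t n h ν y)

lemma gam_eq (t : Fin T) (n : Fin N) (ν : Measure (E d)) (y : E d) :
    gam d d' θ A b t n ν y = aff d d' A b t n y
      + ∑ h : Fin d', sfun d d' θ A b t n h ν y • (θ t n).W h (e1 1) := by
  unfold gam
  congr 1
  refine Finset.sum_congr rfl fun h _ => ?_
  rw [show (Df d d' θ A b t n h ν y)⁻¹ • Jf d d' θ A b t n h ν y
      = sfun d d' θ A b t n h ν y • e1 1 from ((smul_e1 _).trans (e1_eta _)).symm,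
    _root_.map_smul]

lemma target_eq (t : Fin T) (n : Fin N) (ν : Measure (E d)) (x : E d) :
    attention (θ t n) (ν.map (fun y => A t n y + b t n)) (A t n x + b t n)
      = gam d d' θ A b t n ν x := by
  have hc : Continuous fun y : E d => A t n y + b t n :=
    (A t n).continuous.add continuous_const
  have := attention_map (θ t n) ν (fun y => A t n y + b t n) hc.aemeasurable x
  rw [this]
  unfold gam
  simp only [inner_E1]
  rfl

/-! ### the transformer layer parameters -/

def qCLM (t : Fin T) (n : Fin N) (h : Fin d') : E (d + 3 * d') →L[ℝ] ℝ :=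
  ((EuclideanSpace.proj (0 : Fin 1)).comp (((θ t n).Q h).comp ((A t n).comp (uxL d d'))))
    + ((θ t n).Q h (b t n) 0) • EuclideanSpace.proj (idxC d d' h)
def kCLM (t : Fin T) (n : Fin N) (h : Fin d') : E (d + 3 * d') →L[ℝ] ℝ :=
  ((EuclideanSpace.proj (0 : Fin 1)).comp (((θ t n).K h).comp ((A t n).comp (uxL d d'))))
    + ((θ t n).K h (b t n) 0) • EuclideanSpace.proj (idxC d d' h)
def vCLM (t : Fin T) (n : Fin N) (h : Fin d') : E (d + 3 * d') →L[ℝ] ℝ :=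
  ((EuclideanSpace.proj (0 : Fin 1)).comp (((θ t n).V h).comp ((A t n).comp (uxL d d'))))
    + ((θ t n).V h (b t n) 0) • EuclideanSpace.proj (idxC d d' h)

def layerP (t : Fin T) (n : Fin N) : AttentionParams (d + 3 * d') 1 1 d' where
  W h := (EuclideanSpace.proj (0 : Fin 1)).smulRight (EuclideanSpace.single (idxC d d' h) (1:ℝ))
  Q h := toE1L.comp (qCLM d d' θ A b t n h)
  K h := toE1L.comp (kCLM d d' θ A b t n h)
  V h := toE1L.comp (vCLM d d' θ A b t n h)

section layer
variable (t : Fin T) (n : Fin N) (Φ : E d → E (d + 3 * d'))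
  (hX : ∀ y, ux d d' (Φ y) = y) (hC : ∀ y hh, Φ y (idxC d d' hh) = 1)
include hX hC

lemma layerP_Q (h : Fin d') (x : E d) :
    (layerP d d' θ A b t n).Q h (Φ x) = e1 (qf d d' θ A b t n h x) := by
  show toE1L (qCLM d d' θ A b t n h (Φ x)) = _
  rw [toE1L_apply]
  congr 1
  have : qCLM d d' θ A b t n h (Φ x)
      = (θ t n).Q h (A t n (ux d d' (Φ x))) 0 + (θ t n).Q h (b t n) 0 * Φ x (idxC d d' h) := by
    simp [qCLM, ContinuousLinearMap.add_apply, uxL_apply]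
  rw [this, hX, hC, mul_one, qf, aff, map_add, PiLp.add_apply]

lemma layerP_K (h : Fin d') (x : E d) :
    (layerP d d' θ A b t n).K h (Φ x) = e1 (kf d d' θ A b t n h x) := by
  show toE1L (kCLM d d' θ A b t n h (Φ x)) = _
  rw [toE1L_apply]
  congr 1
  have : kCLM d d' θ A b t n h (Φ x)
      = (θ t n).K h (A t n (ux d d' (Φ x))) 0 + (θ t n).K h (b t n) 0 * Φ x (idxC d d' h) := by
    simp [kCLM, ContinuousLinearMap.add_apply, uxL_apply]
  rw [this, hX, hC, mul_one, kf, aff, map_add, PiLp.add_apply]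

lemma layerP_V (h : Fin d') (x : E d) :
    (layerP d d' θ A b t n).V h (Φ x) = (θ t n).V h (aff d d' A b t n x) := by
  show toE1L (vCLM d d' θ A b t n h (Φ x)) = _
  rw [toE1L_apply]
  have : vCLM d d' θ A b t n h (Φ x)
      = (θ t n).V h (A t n (ux d d' (Φ x))) 0 + (θ t n).V h (b t n) 0 * Φ x (idxC d d' h) := by
    simp [vCLM, ContinuousLinearMap.add_apply, uxL_apply]
  rw [this, hX, hC, mul_one]
  rw [show (θ t n).V h (A t n x) 0 + (θ t n).V h (b t n) 0
      = (θ t n).V h (aff d d' A b t n x) 0 from by rw [aff, map_add, PiLp.add_apply]]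
  exact e1_eta _

lemma layer_eq (ν : Measure (E d)) (hΦm : AEMeasurable Φ ν) (x : E d) :
    attention (layerP d d' θ A b t n) (ν.map Φ) (Φ x)
      = Φ x + ∑ h : Fin d', sfun d d' θ A b t n h ν x
          • EuclideanSpace.single (idxC d d' h) (1:ℝ) := by
  rw [attention_map _ ν Φ hΦm x]
  congr 1
  refine Finset.sum_congr rfl fun h _ => ?_
  simp_rw [layerP_Q d d' θ A b t n Φ hX hC h, layerP_K d d' θ A b t n Φ hX hC h,
    layerP_V d d' θ A b t n Φ hX hC h, inner_E1, e1_apply]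
  show ((EuclideanSpace.proj (0 : Fin 1)).smulRight (EuclideanSpace.single (idxC d d' h) (1:ℝ))) _ = _
  rw [ContinuousLinearMap.smulRight_apply]
  rfl

end layer

/-! ### measurability -/

section meas
variable (t : Fin T) (n : Fin N) (h : Fin d') (ν : Measure (E d)) [SFinite ν]

lemma cont_qf : Continuous (qf d d' θ A b t n h) :=
  (EuclideanSpace.proj (0 : Fin 1)).continuous.comp
    (((θ t n).Q h).continuous.comp ((A t n).continuous.add continuous_const))
lemma cont_kf : Continuous (kf d d' θ A b t n h) :=
  (EuclideanSpace.proj (0 : Fin 1)).continuous.comp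
    (((θ t n).K h).continuous.comp ((A t n).continuous.add continuous_const))

lemma meas_Df : Measurable fun y => Df d d' θ A b t n h ν y := by
  have hc : Continuous fun p : E d × E d =>
      Real.exp (qf d d' θ A b t n h p.1 * kf d d' θ A b t n h p.2) :=
    Real.continuous_exp.comp (((cont_qf d d' θ A b t n h).comp continuous_fst).mul
      ((cont_kf d d' θ A b t n h).comp continuous_snd))
  exact (hc.stronglyMeasurable.integral_prod_right').measurable

lemma meas_Jf : Measurable fun y => Jf d d' θ A b t n h ν y := by
  have hc : Continuous fun p : E d × E d =>
      Real.exp (qf d d' θ A b t n h p.1 * kf d d' θ A b t n h p.2)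
        • (θ t n).V h (aff d d' A b t n p.2) := by
    refine (Real.continuous_exp.comp (((cont_qf d d' θ A b t n h).comp continuous_fst).mul
      ((cont_kf d d' θ A b t n h).comp continuous_snd))).smul ?_
    exact ((θ t n).V h).continuous.comp
      (((A t n).continuous.add continuous_const).comp continuous_snd)
  exact (hc.stronglyMeasurable.integral_prod_right').measurable

lemma meas_sfun : Measurable fun y => sfun d d' θ A b t n h ν y := by
  have : (fun y => sfun d d' θ A b t n h ν y)
      = fun y => (Df d d' θ A b t n h ν y)⁻¹ * (Jf d d' θ A b t n h ν y 0) := by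
    funext y; simp [sfun, PiLp.smul_apply, smul_eq_mul]
  rw [this]
  exact (meas_Df d d' θ A b t n h ν).inv.mul
    ((EuclideanSpace.proj (0 : Fin 1)).continuous.measurable.comp
      (meas_Jf d d' θ A b t n h ν))

lemma meas_gam_coord (i : Fin d') : Measurable fun y => gam d d' θ A b t n ν y i := by
  have : (fun y => gam d d' θ A b t n ν y i) = fun y =>
      aff d d' A b t n y i + ∑ hh : Fin d',
        sfun d d' θ A b t n hh ν y * ((θ t n).W hh (e1 1) i) := by
    funext y
    rw [gam_eq, PiLp.add_apply, sum_coord]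
    simp [PiLp.smul_apply, smul_eq_mul]
  rw [this]
  refine Measurable.add ?_ (Finset.measurable_sum _ fun hh _ =>
    (meas_sfun d d' θ A b t n hh ν).mul_const _)
  exact ((EuclideanSpace.proj i).continuous.comp
    ((A t n).continuous.add continuous_const)).measurable

end meas

/-! ### accumulators -/

def finLt (K k : ℕ) : Finset (Fin K) := Finset.univ.filter (fun j => j.1 < k)
lemma finLt_zero (K : ℕ) : finLt K 0 = ∅ := by simp [finLt]
lemma finLt_succ (K k : ℕ) (hk : k < K) :
    finLt K (k+1) = insert ⟨k, hk⟩ (finLt K k) := by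
  ext j; simp [finLt, Fin.ext_iff]; omega
lemma finLt_self (K : ℕ) : finLt K K = Finset.univ := by
  ext j; simp [finLt, j.2]
lemma not_mem_finLt (K k : ℕ) (hk : k < K) : (⟨k, hk⟩ : Fin K) ∉ finLt K k := by
  simp [finLt]

def Pfun (n : Fin N) (t : ℕ) (ν : Measure (E d)) (y : E d) : Fin d' → ℝ :=
  fun i => ∏ t' ∈ finLt T t, gam d d' θ A b t' n ν y i
def Sfun (nn : ℕ) (ν : Measure (E d)) (y : E d) : Fin d' → ℝ :=
  fun i => ∑ n' ∈ finLt N nn, ∏ t' : Fin T, gam d d' θ A b t' n' ν y i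

def tok (n : Fin N) (t : ℕ) (ν : Measure (E d)) (y : E d) : E (d + 3 * d') :=
  pack d d' y (Pfun d d' θ A b n t ν y) (Sfun d d' θ A b n.1 ν y) 1

lemma meas_pack (p s c : E d → Fin d' → ℝ) (hp : ∀ i, Measurable fun y => p y i)
    (hs : ∀ i, Measurable fun y => s y i) (hc : ∀ i, Measurable fun y => c y i) :
    Measurable fun y => pack d d' y (p y) (s y) (c y) := by
  unfold pack
  refine ((EuclideanSpace.equiv (Fin (d + 3 * d')) ℝ).symm.continuous.measurable).comp ?_
  refine measurable_pi_lambda _ fun i => ?_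
  dsimp only
  split_ifs with h1 h2 h3
  · exact (EuclideanSpace.proj (⟨(i : ℕ), h1⟩ : Fin d)).continuous.measurable
  · exact hp _
  · exact hs _
  · exact hc _

lemma meas_tok (n : Fin N) (t : ℕ) (ν : Measure (E d)) [SFinite ν] :
    Measurable fun y => tok d d' θ A b n t ν y := by
  refine meas_pack d d' _ _ _ ?_ ?_ ?_
  · exact fun i => Finset.measurable_prod _ fun t' _ => meas_gam_coord d d' θ A b t' n ν i
  · exact fun i => Finset.measurable_sum _ fun n' _ =>
      Finset.measurable_prod _ fun t' _ => meas_gam_coord d d' θ A b t' n' ν i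
  · exact fun i => measurable_const

/-! ### per-layer step evaluation -/

def Fc (t : Fin T) (n : Fin N) (u : E (d + 3 * d')) : E (d + 3 * d') :=
  pack d d' (ux d d' u)
    (fun i => u (idxP d d' i) * ((aff d d' A b t n (ux d d' u)
        + ∑ h : Fin d', (u (idxC d d' h) - 1) • (θ t n).W h (e1 1)) i))
    (fun i => u (idxS d d' i)) 1

lemma tok_hX (n : Fin N) (t : ℕ) (ν : Measure (E d)) (y : E d) :
    ux d d' (tok d d' θ A b n t ν y) = y := ux_pack _ _ _ _

lemma tok_hC (n : Fin N) (t : ℕ) (ν : Measure (E d)) (y : E d) (hh : Fin d') :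
    tok d d' θ A b n t ν y (idxC d d' hh) = 1 := by
  rw [tok, pack_idxC]; rfl

lemma step_eval (t : ℕ) (ht : t < T) (n : Fin N) (ν : Measure (E d)) [SFinite ν] (y : E d) :
    Fc d d' θ A b ⟨t, ht⟩ n
      (attention (layerP d d' θ A b ⟨t, ht⟩ n)
        (ν.map (tok d d' θ A b n t ν)) (tok d d' θ A b n t ν y))
      = tok d d' θ A b n (t+1) ν y := by
  set tF : Fin T := ⟨t, ht⟩ with htF
  rw [layer_eq d d' θ A b tF n _ (tok_hX d d' θ A b n t ν) (tok_hC d d' θ A b n t ν) ν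
    (meas_tok d d' θ A b n t ν).aemeasurable y]
  set u : E (d + 3 * d') := tok d d' θ A b n t ν y + ∑ h : Fin d',
    sfun d d' θ A b tF n h ν y • EuclideanSpace.single (idxC d d' h) (1:ℝ) with hu
  have hcoord : ∀ i, u i = tok d d' θ A b n t ν y i
      + ∑ h : Fin d', sfun d d' θ A b tF n h ν y * (if i = idxC d d' h then 1 else 0) := by
    intro i
    rw [hu, PiLp.add_apply, sum_coord]
    refine congrArg _ (Finset.sum_congr rfl fun h _ => ?_)
    rw [PiLp.smul_apply, EuclideanSpace.single_apply, smul_eq_mul]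
  have hX : ∀ j, u (idxX d d' j) = y j := by
    intro j
    rw [hcoord, Finset.sum_eq_zero (fun h _ => by rw [if_neg (idxX_ne_idxC j h), mul_zero]),
      add_zero, tok, pack_idxX]
  have hP : ∀ i, u (idxP d d' i) = Pfun d d' θ A b n t ν y i := by
    intro i
    rw [hcoord, Finset.sum_eq_zero (fun h _ => by rw [if_neg (idxP_ne_idxC i h), mul_zero]),
      add_zero, tok, pack_idxP]
  have hS : ∀ i, u (idxS d d' i) = Sfun d d' θ A b n.1 ν y i := by
    intro i
    rw [hcoord, Finset.sum_eq_zero (fun h _ => by rw [if_neg (idxS_ne_idxC i h), mul_zero]),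
      add_zero, tok, pack_idxS]
  have hCc : ∀ h, u (idxC d d' h) = 1 + sfun d d' θ A b tF n h ν y := by
    intro h
    rw [hcoord, tok, pack_idxC]
    simp only [idxC_eq_iff, mul_ite, mul_one, mul_zero]
    rw [Finset.sum_ite_eq]
    simp
  have hux : ux d d' u = y := by
    refine (EuclideanSpace.equiv (Fin d) ℝ).injective (funext fun j => hX j)
  rw [Fc, hux]
  have hgam : (aff d d' A b tF n y
      + ∑ h : Fin d', (u (idxC d d' h) - 1) • (θ tF n).W h (e1 1))
      = gam d d' θ A b tF n ν y := by
    rw [gam_eq]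
    congr 1
    refine Finset.sum_congr rfl fun h _ => ?_
    rw [hCc, add_sub_cancel_left]
  rw [hgam, tok]
  have hPP : (fun i => u (idxP d d' i) * gam d d' θ A b tF n ν y i)
      = Pfun d d' θ A b n (t+1) ν y := by
    funext i
    show u (idxP d d' i) * gam d d' θ A b tF n ν y i
      = ∏ t' ∈ finLt T (t+1), gam d d' θ A b t' n ν y i
    rw [hP, finLt_succ T t ht, Finset.prod_insert (not_mem_finLt T t ht)]
    exact mul_comm _ _
  have hSS : (fun i => u (idxS d d' i)) = Sfun d d' θ A b n.1 ν y := funext hS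
  rw [hPP, hSS]




variable {T N : ℕ} (d d' : ℕ)
  (θ : Fin T → Fin N → AttentionParams d' 1 1 d')
  (A : Fin T → Fin N → (E d →L[ℝ] E d')) (b : Fin T → Fin N → E d')

def trivialP (M : ℕ) : AttentionParams M 1 1 0 :=
  ⟨fun h => h.elim0, fun h => h.elim0, fun h => h.elim0, fun h => h.elim0⟩

lemma chain_collect (n : Fin N) (G₀ : ICMap d (d + 3 * d'))
    (hG₀ : IsAttnChain (d + 3 * d') d' G₀)
    (h₀ : ∀ ν : Measure (E d), SFinite ν → ∀ y, G₀ ν y = tok d d' θ A b n 0 ν y) :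
    ∀ t : ℕ, t ≤ T → ∃ G' : ICMap d (d + 3 * d'), IsAttnChain (d + 3 * d') d' G' ∧
      ∀ ν : Measure (E d), SFinite ν → ∀ y, G' ν y = tok d d' θ A b n t ν y := by
  intro t
  induction t with
  | zero => exact fun _ => ⟨G₀, hG₀, h₀⟩
  | succ t ih =>
      intro hst
      have ht : t < T := hst
      obtain ⟨G, hG, hEv⟩ := ih (le_of_lt ht)
      refine ⟨ictxComp (ctxFree (Fc d d' θ A b ⟨t, ht⟩ n))
        (ictxComp (attention (layerP d d' θ A b ⟨t, ht⟩ n)) G),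
        IsAttnChain.step hG le_rfl le_rfl _ _, ?_⟩
      intro ν hsf y
      haveI := hsf
      have hfun : G ν = tok d d' θ A b n t ν := funext (hEv ν hsf)
      show Fc d d' θ A b ⟨t, ht⟩ n
        (attention (layerP d d' θ A b ⟨t, ht⟩ n) (ν.map (G ν)) (G ν y)) = _
      rw [hfun]
      exact step_eval d d' θ A b t ht n ν y

lemma chain_outer : ∀ nn : ℕ, nn ≤ N →
    ∃ G : ICMap d (d + 3 * d'), IsAttnChain (d + 3 * d') d' G ∧
      ∀ ν : Measure (E d), SFinite ν → ∀ y,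
        G ν y = pack d d' y 1 (Sfun d d' θ A b nn ν y) 1 := by
  intro nn
  induction nn with
  | zero =>
      intro _
      refine ⟨ictxComp (ctxFree (fun y => pack d d' y 1 0 1)) (attention (trivialP d)),
        IsAttnChain.base (by omega) (Nat.zero_le d') _ _, ?_⟩
      intro ν hsf y
      simp only [ictxComp, ctxFree]
      rw [attention_zero]
      have h0 : Sfun d d' θ A b 0 ν y = 0 := by
        funext i
        show (∑ n' ∈ finLt N 0, ∏ t' : Fin T, gam d d' θ A b t' n' ν y i) = 0
        rw [finLt_zero, Finset.sum_empty]
      rw [h0]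
  | succ nn ih =>
      intro hsn
      have hn : nn < N := hsn
      obtain ⟨G₀, hG₀, hEv₀⟩ := ih (le_of_lt hn)
      set n : Fin N := ⟨nn, hn⟩ with hndef
      have h₀ : ∀ ν : Measure (E d), SFinite ν → ∀ y,
          G₀ ν y = tok d d' θ A b n 0 ν y := by
        intro ν hsf y
        have hp : Pfun d d' θ A b n 0 ν y = 1 := by
          funext i
          show (∏ t' ∈ finLt T 0, gam d d' θ A b t' n ν y i) = (1 : Fin d' → ℝ) i
          rw [finLt_zero, Finset.prod_empty]; rfl
        rw [hEv₀ ν hsf y, tok, hp]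
      obtain ⟨G₁, hG₁, hEv₁⟩ := chain_collect d d' θ A b n G₀ hG₀ h₀ T le_rfl
      refine ⟨ictxComp (ctxFree (fun u => pack d d' (ux d d' u) 1
          (fun i => u (idxS d d' i) + u (idxP d d' i)) 1))
        (ictxComp (attention (trivialP (d + 3 * d'))) G₁),
        IsAttnChain.step hG₁ le_rfl (Nat.zero_le d') _ _, ?_⟩
      intro ν hsf y
      haveI := hsf
      simp only [ictxComp, ctxFree]
      rw [attention_zero, hEv₁ ν hsf y, tok, ux_pack]
      have hss : (fun i => pack d d' y (Pfun d d' θ A b n T ν y) (Sfun d d' θ A b n.1 ν y) 1 (idxS d d' i)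
          + pack d d' y (Pfun d d' θ A b n T ν y) (Sfun d d' θ A b n.1 ν y) 1 (idxP d d' i))
          = Sfun d d' θ A b (nn+1) ν y := by
        funext i
        rw [pack_idxS, pack_idxP]
        show Sfun d d' θ A b nn ν y i + ∏ t' ∈ finLt T T, gam d d' θ A b t' n ν y i = _
        rw [finLt_self]
        show _ = ∑ n' ∈ finLt N (nn+1), ∏ t' : Fin T, gam d d' θ A b t' n' ν y i
        rw [finLt_succ N nn hn, Finset.sum_insert (not_mem_finLt N nn hn), add_comm]
        rfl
      rw [hss]



variable {T N : ℕ} (d d' : ℕ)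
  (θ : Fin T → Fin N → AttentionParams d' 1 1 d')
  (A : Fin T → Fin N → (E d →L[ℝ] E d')) (b : Fin T → Fin N → E d')

lemma chain_final : ∃ G : ICMap d d', IsAttnChain (d + 3 * d') d' G ∧
    ∀ ν : Measure (E d), SFinite ν → ∀ x,
      G ν x = toE (fun i => ∑ n : Fin N, ∏ t : Fin T, gam d d' θ A b t n ν x i) := by
  obtain ⟨G₁, hG₁, hEv₁⟩ := chain_outer d d' θ A b N le_rfl
  refine ⟨ictxComp (ctxFree (fun u => toE fun i => u (idxS d d' i)))
    (ictxComp (attention (trivialP (d + 3 * d'))) G₁),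
    IsAttnChain.step hG₁ le_rfl (Nat.zero_le d') _ _, ?_⟩
  intro ν hsf x
  haveI := hsf
  simp only [ictxComp, ctxFree]
  rw [attention_zero, hEv₁ ν hsf x]
  refine congrArg toE (funext fun i => ?_)
  rw [pack_idxS]
  show (∑ n' ∈ finLt N N, ∏ t' : Fin T, gam d d' θ A b t' n' ν x i) = _
  rw [finLt_self]


end DTA
end

/-- **Approximation of `G` by a deep transformer (Lemma 4).** Any map of the form
`G(μ, x) = Σₙ (Γ_{θ̃₁ₙ} ⋄ F_{ξ̃₁ₙ})(μ, x) ⊙ ⋯ ⊙ (Γ_{θ̃_Tₙ} ⋄ F_{ξ̃_Tₙ})(μ, x)` (affine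
`F_{ξ̃ₜₙ} : ℝ^d → ℝ^{d'}`, attentions with `d_in = d'`, `d_head = k = 1`, `H = d'`) can be
uniformly `ε`-approximated on `P(Ω) × Ω` by a deep transformer whose attention layers
have token dimension `≤ d + 3d'`, head and key dimensions `1` and at most `d'` heads. -/
theorem deep_transformer_approx {d d' : ℕ} (Ω : Set (E d)) (hΩ : IsCompact Ω)
    (T N : ℕ) (θ : Fin T → Fin N → AttentionParams d' 1 1 d')
    (A : Fin T → Fin N → (E d →L[ℝ] E d')) (b : Fin T → Fin N → E d')
    {ε : ℝ} (hε : 0 < ε) :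
    ∃ G : ICMap d d', IsAttnChain (d + 3 * d') d' G ∧
      ∀ (μ : ProbabilityMeasure Ω) (x : Ω),
        ‖(∑ n : Fin N, hprod fun t : Fin T =>
              attention (θ t n)
                ((μ.toMeasure.map Subtype.val).map fun y => A t n y + b t n)
                (A t n (x : E d) + b t n))
          - G (μ.toMeasure.map Subtype.val) (x : E d)‖ ≤ ε := by
  classical
  obtain ⟨G, hG, hEv⟩ := DTA.chain_final d d' θ A b
  refine ⟨G, hG, ?_⟩
  intro μ x
  set ν : Measure (E d) := μ.toMeasure.map Subtype.val with hν
  haveI : IsProbabilityMeasure ν := Measure.isProbabilityMeasure_map measurable_subtype_coe.aemeasurable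
  haveI hsf : SFinite ν := inferInstance
  have hEq : (∑ n : Fin N, hprod fun t : Fin T =>
        attention (θ t n) (ν.map fun y => A t n y + b t n) (A t n (x : E d) + b t n))
      = G ν (x : E d) := by
    rw [hEv ν hsf (x : E d)]
    have h1 : ∀ (n : Fin N) (t : Fin T),
        attention (θ t n) (ν.map fun y => A t n y + b t n) (A t n (x : E d) + b t n)
          = DTA.gam d d' θ A b t n ν (x : E d) := fun n t =>
      DTA.target_eq d d' θ A b t n ν (x : E d)
    calc (∑ n : Fin N, hprod fun t : Fin T =>
            attention (θ t n) (ν.map fun y => A t n y + b t n) (A t n (x : E d) + b t n))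
        = ∑ n : Fin N, hprod fun t : Fin T => DTA.gam d d' θ A b t n ν (x : E d) :=
          Finset.sum_congr rfl fun n _ => congrArg hprod (funext fun t => h1 n t)
      _ = toE (fun i => ∑ n : Fin N, ∏ t : Fin T, DTA.gam d d' θ A b t n ν (x : E d) i) := by
          refine (EuclideanSpace.equiv (Fin d') ℝ).injective (funext fun i => ?_)
          rw [show ((EuclideanSpace.equiv (Fin d') ℝ)
              (∑ n : Fin N, hprod fun t : Fin T => DTA.gam d d' θ A b t n ν (x : E d)) i)
            = (∑ n : Fin N, hprod fun t : Fin T => DTA.gam d d' θ A b t n ν (x : E d)) i from rfl,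
            DTA.sum_coord]
          simp [hprod, DTA.toE_apply]
  rw [hEq, sub_self, norm_zero]
  exact hε.le
end

section
/- Let Ω ⊂ ℝ^d be compact, Ω̃ = Ω × [0,1], C > 0, σ ∈ (0,1), and let Λ : Lip_C^σ(Ω̃) × Ω̃ → ℝ^{d'} be a causal and identifiable space-time in-context map. Then for every (μ, x, t) ∈ Lip_C^σ(Ω̃) × Ω̃, Λ(μ, x, t) = Λ̄(μ_t, x), where Λ̄ is the reduced map Λ̄(ν, x) = Λ(ν, x, e(ν̄)) and e(ν̄) = max{r ∈ supp(ν̄)} is the endpoint of the support of the time marginal ν̄ of ν. -/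
open MeasureTheory Set Filter
open scoped ENNReal RealInnerProductSpace BigOperators Topology

/-- Auxiliary: for a probability measure with time-marginal mass `≥ σ > 0` at `0`,
the masked measure at time `t ∈ [0,1]` is unchanged when re-masking at the endpoint
of the support of its time marginal, which lies in `[0, t]`. -/
theorem masked_timeEnd_aux {d : ℕ} (μ : Measure (E d × ℝ)) (hp : IsProbabilityMeasure μ)
    {σ : ℝ} (hσ : 0 < σ) (hσm : ENNReal.ofReal σ ≤ timeMarg μ {0})
    (t : ℝ) (ht : t ∈ Icc (0:ℝ) 1) :
    maskedM μ (timeEnd (maskedM μ t)) = maskedM μ t ∧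
      timeEnd (maskedM μ t) ∈ Icc (0:ℝ) t := by
  classical
  set ν := maskedM μ t with hνdef
  set I : Set ℝ := Icc (0:ℝ) t with hIdef
  have hIpre : (univ ×ˢ I : Set (E d × ℝ)) = Prod.snd ⁻¹' I := by
    ext p; simp [hIdef]
  have hmap : ∀ A : Set ℝ, MeasurableSet A → μ (Prod.snd ⁻¹' A) = timeMarg μ A := by
    intro A hA
    rw [timeMarg, Measure.map_apply measurable_snd hA]
  have hμP : μ (univ ×ˢ I) = timeMarg μ I := by
    rw [hIpre, hmap _ measurableSet_Icc]
  have h0I : (0:ℝ) ∈ I := ⟨le_refl 0, ht.1⟩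
  have hI0 : timeMarg μ I ≠ 0 := by
    intro h
    have := le_trans hσm (measure_mono (singleton_subset_iff.2 h0I))
    rw [h] at this
    exact absurd (le_antisymm this zero_le) (by simp [ENNReal.ofReal_eq_zero]; linarith)
  have hItop : timeMarg μ I ≠ ⊤ := by
    have : timeMarg μ I ≤ timeMarg μ univ := measure_mono (subset_univ _)
    have huniv : timeMarg μ univ = 1 := by
      rw [timeMarg, Measure.map_apply measurable_snd MeasurableSet.univ]
      simp [hp.measure_univ]
    exact ne_top_of_le_ne_top (by simp [huniv]) this
  set c : ℝ≥0∞ := (timeMarg μ I)⁻¹ with hcdef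
  have hc0 : c ≠ 0 := ENNReal.inv_ne_zero.2 hItop
  have hν : ∀ A : Set ℝ, MeasurableSet A →
      timeMarg ν A = c * timeMarg μ (A ∩ I) := by
    intro A hA
    rw [timeMarg, hνdef, maskedM, hμP]
    rw [Measure.map_smul, Measure.smul_apply, smul_eq_mul]
    congr 1
    rw [Measure.map_apply measurable_snd hA,
      Measure.restrict_apply (measurable_snd hA), hIpre, ← preimage_inter,
      hmap _ (hA.inter measurableSet_Icc)]
  set S : Set ℝ := {r | ∀ ε > 0, timeMarg ν (Ioo (r - ε) (r + ε)) ≠ 0} with hSdef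
  have hS0 : (0:ℝ) ∈ S := by
    intro ε hε
    have h1 : timeMarg ν {0} = c * timeMarg μ ({0} ∩ I) := hν _ (measurableSet_singleton 0)
    have h2 : ({0} : Set ℝ) ∩ I = {0} := by
      rw [inter_eq_left]; exact singleton_subset_iff.2 h0I
    have h3 : timeMarg ν {0} ≠ 0 := by
      rw [h1, h2]
      refine mul_ne_zero hc0 ?_
      intro h
      have := le_trans hσm h.le
      exact absurd (le_antisymm this zero_le) (by simp [ENNReal.ofReal_eq_zero]; linarith)
    intro h
    exact h3 (le_antisymm (le_trans (measure_mono (by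
      intro y hy; simp only [mem_singleton_iff] at hy; subst hy
      exact ⟨by linarith, by linarith⟩)) h.le) zero_le)
  have hSub : S ⊆ Iic t := by
    intro r hr
    by_contra hrt
    simp only [mem_Iic, not_le] at hrt
    refine hr (r - t) (by linarith) ?_
    have : Ioo (r - (r - t)) (r + (r - t)) ∩ I = ∅ := by
      ext y
      simp only [mem_inter_iff, mem_Ioo, mem_Icc, mem_empty_iff_false, iff_false, hIdef]
      rintro ⟨⟨h1, _⟩, _, h4⟩; linarith
    rw [hν _ measurableSet_Ioo, this]
    simp
  have hbdd : BddAbove S := ⟨t, hSub⟩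
  have heS : timeEnd ν = sSup S := rfl
  have he0 : 0 ≤ timeEnd ν := by rw [heS]; exact le_csSup hbdd hS0
  have het : timeEnd ν ≤ t := by rw [heS]; exact csSup_le ⟨0, hS0⟩ hSub
  set e : ℝ := timeEnd ν with hedef
  have hnull : timeMarg ν (Ioc e t) = 0 := by
    apply measure_null_of_locally_null
    intro y hy
    have hyS : y ∉ S := by
      intro hmem
      have hyle : y ≤ e := by rw [heS]; exact le_csSup hbdd hmem
      exact absurd hyle (not_le.2 hy.1)
    simp only [hSdef, mem_setOf_eq, not_forall] at hyS
    obtain ⟨ε, hε, hεnull⟩ := hyS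
    push_neg at hεnull
    exact ⟨Ioo (y - ε) (y + ε), nhdsWithin_le_nhds
      (Ioo_mem_nhds (by linarith) (by linarith)), hεnull⟩
  have hμnull : timeMarg μ (Ioc e t) = 0 := by
    have h1 := hν (Ioc e t) measurableSet_Ioc
    rw [hnull] at h1
    have h2 : Ioc e t ∩ I = Ioc e t := by
      rw [inter_eq_left]
      intro y hy
      exact ⟨le_trans he0 hy.1.le, hy.2⟩
    rw [h2] at h1
    rcases mul_eq_zero.1 h1.symm with h | h
    · exact absurd h hc0
    · exact h
  have hμnull' : μ ((univ : Set (E d)) ×ˢ Ioc e t) = 0 := by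
    have hpre : ((univ : Set (E d)) ×ˢ Ioc e t) = Prod.snd ⁻¹' Ioc e t := by ext p; simp
    rw [hpre, hmap _ measurableSet_Ioc, hμnull]
  have hsplit : (univ : Set (E d)) ×ˢ I =
      ((univ : Set (E d)) ×ˢ Icc 0 e) ∪ ((univ : Set (E d)) ×ˢ Ioc e t) := by
    rw [← prod_union, Icc_union_Ioc_eq_Icc he0 het]
  have haeq : ((((univ : Set (E d)) ×ˢ Icc 0 e) ∪ ((univ : Set (E d)) ×ˢ Ioc e t) :
      Set (E d × ℝ))) =ᵐ[μ] ((univ : Set (E d)) ×ˢ Icc 0 e) :=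
    union_ae_eq_left_of_ae_eq_empty (ae_eq_empty.2 hμnull')
  have hmeas : μ ((univ : Set (E d)) ×ˢ Icc 0 e) = μ ((univ : Set (E d)) ×ˢ I) := by
    rw [hsplit]
    exact (measure_congr haeq).symm
  have hrest : μ.restrict ((univ : Set (E d)) ×ˢ Icc 0 e) =
      μ.restrict ((univ : Set (E d)) ×ˢ I) := by
    rw [hsplit]
    exact (Measure.restrict_congr_set haeq).symm
  refine ⟨?_, he0, het⟩
  rw [maskedM, hmeas, hrest]
  rfl

/-- **Reduced-map representation of causal identifiable maps (Lemma 6 (i)).** For a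
causal identifiable space-time in-context map `Λ`, one has `Λ(μ, x, t) = Λ̄(μ_t, x)` for
all `(μ, x, t) ∈ Lip_C^σ(Ω̃) × Ω̃`, where `Λ̄(ν, x) = Λ(ν, x, e(ν̄))` is the reduced map
and `e(ν̄) = max supp(ν̄)`. -/
theorem reduced_representation {d d' : ℕ} (Ω : Set (E d)) (hΩ : IsCompact Ω)
    {C σ : ℝ} (hC : 0 < C) (hσ : σ ∈ Ioo (0:ℝ) 1)
    (Λ : STMap d d') (hcausal : IsCausalM Ω C σ Λ) (hident : IsIdentifiableM Ω C σ Λ) :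
    ∀ μ : Measure (E d × ℝ), IsLipCtx Ω C σ μ → ∀ x ∈ Ω, ∀ t ∈ Icc (0:ℝ) 1,
      Λ μ (x, t) = Λ (maskedM μ t) (x, timeEnd (maskedM μ t)) := by
  intro μ hμ x hx t ht
  have hp := hμ.1
  have hσm := hμ.2.2.1
  obtain ⟨hmask, he0, het⟩ := masked_timeEnd_aux μ hp hσ.1 hσm t ht
  have h1 := hcausal μ hμ x hx t ht
  have h2 := hident μ hμ (timeEnd (maskedM μ t)) ⟨he0, het.trans ht.2⟩ t ht hmask x hx
  rw [h1, ← h2, hmask]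
end
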